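/- arXiv:1205.6936 — 5 statements merged into one kernel-verified Lean document; each statement's English description precedes it below -/
import Mathlib

section
/- Let Y be a compact metric space, let ν and ν_1, ν_2, … be Borel probability measures on Y with ν_n → ν weakly, and let 0 < κ' < κ < 1. Then limsup_{n→∞} diam(ν_n, κ) ≤ diam(ν, κ'). -/
open MeasureTheory Filter Topology

/-- The partial diameter `diam(ν, κ)`: the infimum of the diameters of closed sets of
`ν`-measure at least `1 - κ`. -/
noncomputable def partialDiam {Y : Type*} [MetricSpace Y]
    [MeasurableSpace Y] (ν : Measure Y) (κ : ℝ) : ℝ :=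
  sInf (Metric.diam '' {Y₀ : Set Y | IsClosed Y₀ ∧ ENNReal.ofReal (1 - κ) ≤ ν Y₀})

/-- If `ν_n → ν` weakly on a compact metric space and `0 < κ' < κ < 1`,
then `limsup_n diam(ν_n, κ) ≤ diam(ν, κ')`. -/
theorem limsup_partialDiam_le
    (Y : Type*) [MetricSpace Y] [CompactSpace Y]
    [MeasurableSpace Y] [BorelSpace Y]
    (ν : ℕ → Measure Y) (νlim : Measure Y)
    [∀ n, IsProbabilityMeasure (ν n)] [IsProbabilityMeasure νlim]
    (hweak : ∀ g : C(Y, ℝ),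
      Tendsto (fun n => ∫ y, g y ∂(ν n)) atTop (𝓝 (∫ y, g y ∂νlim)))
    (κ' κ : ℝ) (h0 : 0 < κ') (h1 : κ' < κ) (h2 : κ < 1) :
    limsup (fun n => partialDiam (ν n) κ) atTop ≤ partialDiam νlim κ' := by
  -- package as ProbabilityMeasure
  set P : ℕ → ProbabilityMeasure Y := fun n => ⟨ν n, inferInstance⟩
  set Plim : ProbabilityMeasure Y := ⟨νlim, inferInstance⟩
  have hP : Tendsto P atTop (𝓝 Plim) := by
    rw [ProbabilityMeasure.tendsto_iff_forall_integral_tendsto]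
    intro f
    exact hweak f.toContinuousMap
  -- nonneg of partialDiam and cobounded
  have hnonneg : ∀ (μ : Measure Y) (c : ℝ), 0 ≤ partialDiam μ c := by
    intro μ c
    apply Real.sInf_nonneg
    rintro x ⟨s, -, rfl⟩
    exact Metric.diam_nonneg
  have hcobdd : IsCoboundedUnder (· ≤ ·) atTop (fun n => partialDiam (ν n) κ) :=
    IsBoundedUnder.isCoboundedUnder_le ⟨0, by rw [eventually_map]; exact Eventually.of_forall fun n => (hnonneg (ν n) κ).ge⟩
  -- the defining set for νlim κ' is nonempty
  have hne : (Metric.diam '' {Y₀ : Set Y | IsClosed Y₀ ∧ ENNReal.ofReal (1 - κ') ≤ νlim Y₀}).Nonempty := by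
    refine ⟨Metric.diam (Set.univ : Set Y), Set.univ, ⟨isClosed_univ, ?_⟩, rfl⟩
    simp [measure_univ, ENNReal.ofReal_le_one]
    linarith
  rw [partialDiam]
  apply le_csInf hne
  rintro d ⟨Y₀, ⟨hY₀c, hY₀m⟩, rfl⟩
  -- suffices to show limsup ≤ diam Y₀ + 2ε for all ε > 0
  have key : ∀ ε : ℝ, 0 < ε → limsup (fun n => partialDiam (ν n) κ) atTop ≤ Metric.diam Y₀ + 2 * ε := by
    intro ε hε
    apply limsup_le_of_le hcobdd
    -- eventually ν n (thickening ε Y₀) > 1 - κ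
    have hsub : Y₀ ⊆ Metric.thickening ε Y₀ := Metric.self_subset_thickening hε Y₀
    have hopen : IsOpen (Metric.thickening ε Y₀) := Metric.isOpen_thickening
    have hlim : νlim (Metric.thickening ε Y₀) ≤
        atTop.liminf fun n => ν n (Metric.thickening ε Y₀) :=
      ProbabilityMeasure.le_liminf_measure_open_of_tendsto hP hopen
    have hlt : ENNReal.ofReal (1 - κ) < atTop.liminf fun n => ν n (Metric.thickening ε Y₀) := by
      refine lt_of_lt_of_le (lt_of_lt_of_le ?_ hY₀m) (le_trans (measure_mono hsub) hlim)
      exact ENNReal.ofReal_lt_ofReal_iff_of_nonneg (by linarith) |>.mpr (by linarith)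
    have hev : ∀ᶠ n in atTop, ENNReal.ofReal (1 - κ) < ν n (Metric.thickening ε Y₀) :=
      eventually_lt_of_lt_liminf hlt
    filter_upwards [hev] with n hn
    have hmem : Metric.diam (Metric.cthickening ε Y₀) ∈
        Metric.diam '' {Y₀ : Set Y | IsClosed Y₀ ∧ ENNReal.ofReal (1 - κ) ≤ ν n Y₀} := by
      refine ⟨_, ⟨Metric.isClosed_cthickening, ?_⟩, rfl⟩
      exact le_trans hn.le (measure_mono (Metric.thickening_subset_cthickening ε Y₀))
    have hbdd : BddBelow (Metric.diam '' {Y₀ : Set Y | IsClosed Y₀ ∧ ENNReal.ofReal (1 - κ) ≤ ν n Y₀}) := by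
      refine ⟨0, ?_⟩
      rintro x ⟨s, -, rfl⟩
      exact Metric.diam_nonneg
    calc partialDiam (ν n) κ ≤ Metric.diam (Metric.cthickening ε Y₀) := csInf_le hbdd hmem
      _ ≤ Metric.diam Y₀ + 2 * ε := Metric.diam_cthickening_le Y₀ hε.le
  -- conclude
  have : ∀ δ : ℝ, 0 < δ → limsup (fun n => partialDiam (ν n) κ) atTop ≤ Metric.diam Y₀ + δ := by
    intro δ hδ
    have := key (δ / 2) (by linarith)
    linarith [this]
  exact le_of_forall_pos_le_add this
end

section
/- Let Y be a compact metric space, let ν and ν_1, ν_2, … be Borel probability measures on Y with ν_n → ν weakly, and let 0 < κ < 1. Then liminf_{n→∞} diam(ν_n, κ) ≥ diam(ν, κ). -/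
open MeasureTheory Filter Topology

/-- If `ν_n → ν` weakly on a compact metric space and `0 < κ < 1`,
then `liminf_n diam(ν_n, κ) ≥ diam(ν, κ)`. -/
theorem liminf_partialDiam_ge
    (Y : Type*) [MetricSpace Y] [CompactSpace Y]
    [MeasurableSpace Y] [BorelSpace Y]
    (ν : ℕ → Measure Y) (νlim : Measure Y)
    [∀ n, IsProbabilityMeasure (ν n)] [IsProbabilityMeasure νlim]
    (hweak : ∀ g : C(Y, ℝ),
      Tendsto (fun n => ∫ y, g y ∂(ν n)) atTop (𝓝 (∫ y, g y ∂νlim)))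
    (κ : ℝ) (h0 : 0 < κ) (h1 : κ < 1) :
    partialDiam νlim κ ≤ liminf (fun n => partialDiam (ν n) κ) atTop := by
  classical
  set L : ℝ := liminf (fun n => partialDiam (ν n) κ) atTop with hL
  -- The defining sets are nonempty (univ works) and bounded below by 0.
  have hκ1 : ENNReal.ofReal (1 - κ) ≤ 1 := by
    calc ENNReal.ofReal (1 - κ) ≤ ENNReal.ofReal 1 :=
          ENNReal.ofReal_le_ofReal (by linarith)
      _ = 1 := ENNReal.ofReal_one
  have hmem_univ : ∀ (μ : Measure Y) [IsProbabilityMeasure μ],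
      Metric.diam (Set.univ : Set Y) ∈
        Metric.diam '' {Y₀ : Set Y | IsClosed Y₀ ∧ ENNReal.ofReal (1 - κ) ≤ μ Y₀} := by
    intro μ hμ
    exact ⟨Set.univ, ⟨isClosed_univ, by simpa using hκ1⟩, rfl⟩
  have hbdd : ∀ (μ : Measure Y),
      BddBelow (Metric.diam '' {Y₀ : Set Y | IsClosed Y₀ ∧ ENNReal.ofReal (1 - κ) ≤ μ Y₀}) := by
    intro μ
    exact ⟨0, fun d ⟨s, _, hd⟩ => hd ▸ Metric.diam_nonneg⟩
  have hub : ∀ n, partialDiam (ν n) κ ≤ Metric.diam (Set.univ : Set Y) := fun n =>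
    csInf_le (hbdd _) (hmem_univ (ν n))
  have hlb : ∀ n, 0 ≤ partialDiam (ν n) κ := fun n =>
    le_csInf ⟨_, hmem_univ (ν n)⟩ (fun d ⟨s, _, hd⟩ => hd ▸ Metric.diam_nonneg)
  have hBddAbove : IsBoundedUnder (· ≤ ·) atTop (fun n => partialDiam (ν n) κ) :=
    isBoundedUnder_of ⟨Metric.diam (Set.univ : Set Y), hub⟩
  have hCobdd : IsCoboundedUnder (· ≥ ·) atTop (fun n => partialDiam (ν n) κ) :=
    hBddAbove.isCoboundedUnder_ge
  have hBddBelow : IsBoundedUnder (· ≥ ·) atTop (fun n => partialDiam (ν n) κ) :=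
    isBoundedUnder_of ⟨0, hlb⟩
  have hL0 : 0 ≤ L := Filter.le_liminf_of_le hCobdd (Filter.Eventually.of_forall hlb)
  -- Weak convergence as ProbabilityMeasure convergence.
  let P : ℕ → ProbabilityMeasure Y := fun n => ⟨ν n, inferInstance⟩
  let Plim : ProbabilityMeasure Y := ⟨νlim, inferInstance⟩
  have hP : Tendsto P atTop (𝓝 Plim) := by
    rw [ProbabilityMeasure.tendsto_iff_forall_integral_tendsto]
    intro f
    exact hweak f.toContinuousMap
  -- It suffices to show partialDiam νlim κ ≤ L + ε for every ε > 0.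
  refine le_of_forall_pos_le_add (fun ε hε => ?_)
  set δ : ℝ := ε / 8 with hδ
  have hδpos : 0 < δ := by positivity
  -- Infinitely many n with partialDiam (ν n) κ < L + ε/4.
  have hfreq : ∃ᶠ n in atTop, partialDiam (ν n) κ < L + ε / 4 :=
    frequently_lt_of_liminf_lt hCobdd (by linarith)
  have hNinf : {n : ℕ | partialDiam (ν n) κ < L + ε / 4}.Infinite :=
    Nat.frequently_atTop_iff_infinite.mp hfreq
  set Nset := {n : ℕ | partialDiam (ν n) κ < L + ε / 4} with hNset
  -- Choose closed sets F n of measure ≥ 1-κ with diam < L + ε/2, for n ∈ Nset.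
  have hchoice : ∀ n : ℕ, ∃ F : Set Y, n ∈ Nset →
      IsClosed F ∧ ENNReal.ofReal (1 - κ) ≤ ν n F ∧ Metric.diam F < L + ε / 2 := by
    intro n
    by_cases hn : n ∈ Nset
    · have : partialDiam (ν n) κ < L + ε / 2 := lt_of_lt_of_le hn (by linarith)
      rw [partialDiam] at this
      obtain ⟨d, ⟨F, ⟨hFc, hFm⟩, hdF⟩, hdlt⟩ :=
        (csInf_lt_iff (hbdd (ν n)) ⟨_, hmem_univ (ν n)⟩).mp this
      exact ⟨F, fun _ => ⟨hFc, hFm, hdF ▸ hdlt⟩⟩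
    · exact ⟨∅, fun h => absurd h hn⟩
  choose F hF using hchoice
  -- Finite δ-net of Y.
  obtain ⟨t, ht⟩ : ∃ t : Finset Y, (Set.univ : Set Y) ⊆ ⋃ p ∈ t, Metric.ball p δ := by
    obtain ⟨t, ht⟩ := isCompact_univ.elim_finite_subcover (fun p : Y => Metric.ball p δ)
      (fun p => Metric.isOpen_ball) (fun y _ => Set.mem_iUnion.mpr ⟨y, Metric.mem_ball_self hδpos⟩)
    exact ⟨t, ht⟩
  -- The "trace" of F n on the net.
  set S : ℕ → Finset Y := fun n => t.filter (fun p => (Metric.ball p δ ∩ F n).Nonempty) with hS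
  -- Pigeonhole: some trace S₀ occurs for infinitely many n ∈ Nset.
  obtain ⟨S₀, hS₀⟩ : ∃ S₀ : Finset Y, {n | n ∈ Nset ∧ S n = S₀}.Infinite := by
    by_contra hcon
    push_neg at hcon
    have : Nset ⊆ ⋃ s ∈ (t.powerset : Finset (Finset Y)), {n | n ∈ Nset ∧ S n = s} := by
      intro n hn
      refine Set.mem_biUnion ?_ ⟨hn, rfl⟩
      exact Finset.mem_powerset.mpr (Finset.filter_subset _ _)
    exact hNinf (Set.Finite.subset (Set.Finite.biUnion (t.powerset.finite_toSet)
      (fun s _ => hcon s)) this)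
  set M := {n | n ∈ Nset ∧ S n = S₀} with hM
  obtain ⟨n₀, hn₀⟩ := hS₀.nonempty
  -- The candidate closed set.
  set C : Set Y := closure (⋃ p ∈ S₀, Metric.ball p δ) with hC
  have hCclosed : IsClosed C := isClosed_closure
  -- Each F n, n ∈ M, is contained in C.
  have hFsub : ∀ n ∈ M, F n ⊆ C := by
    intro n hn x hx
    obtain ⟨p, hpt, hxp⟩ := Set.mem_iUnion₂.mp (ht (Set.mem_univ x))
    have hpS : p ∈ S n := Finset.mem_filter.mpr ⟨hpt, ⟨x, hxp, hx⟩⟩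
    rw [hn.2] at hpS
    exact subset_closure (Set.mem_biUnion hpS hxp)
  -- Diameter bound for C.
  have hFn₀ := hF n₀ hn₀.1
  have hdiamC : Metric.diam C ≤ L + ε := by
    rw [hC, Metric.diam_closure]
    refine Metric.diam_le_of_forall_dist_le (by linarith) ?_
    rintro x hx y hy
    obtain ⟨p, hpS, hxp⟩ := Set.mem_iUnion₂.mp hx
    obtain ⟨q, hqS, hyq⟩ := Set.mem_iUnion₂.mp hy
    -- p, q ∈ S₀ = S n₀, so the balls meet F n₀.
    have hpS' : p ∈ S n₀ := hn₀.2 ▸ hpS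
    have hqS' : q ∈ S n₀ := hn₀.2 ▸ hqS
    obtain ⟨a, hap, haF⟩ := (Finset.mem_filter.mp hpS').2
    obtain ⟨b, hbq, hbF⟩ := (Finset.mem_filter.mp hqS').2
    have hab : dist a b ≤ Metric.diam (F n₀) :=
      Metric.dist_le_diam_of_mem Metric.isBounded_of_compactSpace haF hbF
    have h1 : dist x y ≤ dist x p + dist p a + dist a b + dist b q + dist q y := by
      calc dist x y ≤ dist x b + dist b y := dist_triangle _ _ _
        _ ≤ (dist x a + dist a b) + dist b y := by
            gcongr; exact dist_triangle _ _ _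
        _ ≤ ((dist x p + dist p a) + dist a b) + dist b y := by
            gcongr; exact dist_triangle _ _ _
        _ ≤ ((dist x p + dist p a) + dist a b) + (dist b q + dist q y) := by
            gcongr; exact dist_triangle _ _ _
        _ = dist x p + dist p a + dist a b + dist b q + dist q y := by ring
    have hxp' : dist x p < δ := Metric.mem_ball.mp hxp
    have hpa : dist p a < δ := by
      rw [dist_comm]; exact Metric.mem_ball.mp hap
    have hbq' : dist b q < δ := Metric.mem_ball.mp hbq
    have hqy : dist q y < δ := by
      rw [dist_comm]; exact Metric.mem_ball.mp hyq
    have := hFn₀.2.2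
    calc dist x y ≤ dist x p + dist p a + dist a b + dist b q + dist q y := h1
      _ ≤ δ + δ + Metric.diam (F n₀) + δ + δ := by gcongr <;> linarith
      _ ≤ δ + δ + (L + ε / 2) + δ + δ := by gcongr <;> linarith
      _ = L + ε := by rw [hδ]; ring
  -- Portmanteau: νlim C ≥ 1 - κ.
  have hmeasC : ENNReal.ofReal (1 - κ) ≤ νlim C := by
    have hfreq' : ∃ᶠ n in atTop, ENNReal.ofReal (1 - κ) ≤ ν n C := by
      refine Nat.frequently_atTop_iff_infinite.mpr (hS₀.mono ?_)
      intro n hn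
      exact le_trans (hF n hn.1).2.1 (measure_mono (hFsub n hn))
    have hlimsup : ENNReal.ofReal (1 - κ) ≤ limsup (fun n => ν n C) atTop :=
      Filter.le_limsup_of_frequently_le hfreq' (isBoundedUnder_of ⟨⊤, fun n => le_top⟩)
    have hport : limsup (fun n => (P n : Measure Y) C) atTop ≤ (Plim : Measure Y) C :=
      ProbabilityMeasure.limsup_measure_closed_le_of_tendsto hP hCclosed
    exact le_trans hlimsup hport
  -- Conclude.
  have : partialDiam νlim κ ≤ Metric.diam C :=
    csInf_le (hbdd νlim) ⟨C, ⟨hCclosed, hmeasC⟩, rfl⟩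
  linarith
end

section
/- For each integer m > 0 and each ε > 0 there exists δ > 0 with the following property. Let G = ({a_1,…,a_m}, d_G, μ) and H = ({a_1,…,a_m}, d_H, ν) be finite pseudometric measure spaces on the same m-point set, with pseudometrics taking values in [0,1] and probability weights μ, ν, such that |μ(a_i) − ν(a_i)| ≤ δ for all 1 ≤ i ≤ m and |d_G(a_i,a_j) − d_H(a_i,a_j)| ≤ δ for all 1 ≤ i, j ≤ m. Then there exist measure-preserving Borel maps Ψ₁ : ([0,1], λ) → ({a_1,…,a_m}, μ) and Ψ₂ : ([0,1], λ) → ({a_1,…,a_m}, ν) and a Borel set S ⊆ [0,1] with λ(S) ≤ ε such that |d_G(Ψ₁(x), Ψ₁(y)) − d_H(Ψ₂(x), Ψ₂(y))| ≤ ε for all x, y ∈ [0,1] \ S. -/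
open MeasureTheory

namespace FMC

variable {m : ℕ}

noncomputable def cum (w : Fin m → ℝ) (k : ℕ) : ℝ :=
  ∑ i : Fin m, if (i : ℕ) < k then w i else 0

lemma cum_zero (w : Fin m → ℝ) : cum w 0 = 0 := by simp [cum]

lemma cum_top (w : Fin m → ℝ) : cum w m = ∑ i, w i := by
  simp [cum, Fin.is_lt]

lemma cum_mono (w : Fin m → ℝ) (hw : ∀ i, 0 ≤ w i) {k l : ℕ} (h : k ≤ l) :
    cum w k ≤ cum w l := by
  apply Finset.sum_le_sum
  intro i _
  by_cases hik : (i:ℕ) < k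
  · simp [hik, hik.trans_le h]
  · by_cases hil : (i:ℕ) < l <;> simp [hik, hil, hw i]

lemma cum_nonneg (w : Fin m → ℝ) (hw : ∀ i, 0 ≤ w i) (k : ℕ) : 0 ≤ cum w k := by
  simpa [cum_zero] using cum_mono w hw (Nat.zero_le k)

lemma cum_le_one (w : Fin m → ℝ) (hw : ∀ i, 0 ≤ w i) (hsum : ∑ i, w i = 1)
    {k : ℕ} (hk : k ≤ m) : cum w k ≤ 1 := by
  have := cum_mono w hw hk
  rwa [cum_top, hsum] at this

lemma cum_succ (w : Fin m → ℝ) (i : Fin m) :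
    cum w ((i:ℕ)+1) = cum w i + w i := by
  have : ∀ j : Fin m, (if (j:ℕ) < (i:ℕ)+1 then w j else 0)
      = (if (j:ℕ) < (i:ℕ) then w j else 0) + (if j = i then w j else 0) := by
    intro j
    rcases lt_trichotomy (j:ℕ) (i:ℕ) with h | h | h
    · have : j ≠ i := fun e => by simp [e] at h
      simp [h, h.trans (Nat.lt_succ_self _), this]
    · have : j = i := Fin.ext h
      simp [this]
    · have h1 : ¬ ((j:ℕ) < (i:ℕ)+1) := by omega
      have h2 : ¬ ((j:ℕ) < (i:ℕ)) := by omega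
      have : j ≠ i := fun e => by simp [e] at h
      simp [h1, h2, this]
  rw [cum, Finset.sum_congr rfl (fun j _ => this j), Finset.sum_add_distrib]
  simp [cum]

noncomputable def psi (hm : 0 < m) (w : Fin m → ℝ) (t : ℝ) : Fin m :=
  if h : ∃ k, k < m ∧ t < cum w (k+1) then ⟨Nat.find h, (Nat.find_spec h).1⟩
  else ⟨m-1, Nat.sub_lt hm one_pos⟩

lemma psi_eq_iff (hm : 0 < m) (w : Fin m → ℝ) (hw : ∀ i, 0 ≤ w i)
    (hsum : ∑ i, w i = 1) (t : ℝ) (i : Fin m) :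
    psi hm w t = i ↔
      (((i:ℕ) = 0 ∨ cum w i ≤ t) ∧ ((i:ℕ) = m-1 ∨ t < cum w ((i:ℕ)+1))) := by
  have hcm : cum w m = 1 := by rw [cum_top, hsum]
  by_cases h : ∃ k, k < m ∧ t < cum w (k+1)
  · have hfind := Nat.find_spec h
    have htm : t < cum w m := by
      obtain ⟨k, hk, hlt⟩ := h
      exact hlt.trans_le (cum_mono w hw (by omega))
    constructor
    · intro he
      have hval : Nat.find h = (i:ℕ) := by
        rw [← he]; simp [psi, h]
      constructor
      · rcases Nat.eq_zero_or_pos (i:ℕ) with h0 | h0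
        · exact Or.inl h0
        · right
          have hmin := Nat.find_min h (m := (i:ℕ)-1) (by omega)
          push_neg at hmin
          have : cum w (((i:ℕ)-1)+1) ≤ t := hmin (by omega)
          have he2 : ((i:ℕ)-1)+1 = (i:ℕ) := by omega
          rwa [he2] at this
      · exact Or.inr (by rw [← hval]; exact hfind.2)
    · rintro ⟨h1, h2⟩
      have hp : (i:ℕ) < m ∧ t < cum w ((i:ℕ)+1) := by
        refine ⟨i.is_lt, ?_⟩
        rcases h2 with h2 | h2
        · have : (i:ℕ)+1 = m := by omega
          rw [this]; exact htm
        · exact h2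
      have hle : Nat.find h ≤ (i:ℕ) := Nat.find_le hp
      have hge : (i:ℕ) ≤ Nat.find h := by
        by_contra hlt
        push_neg at hlt
        rcases h1 with h1 | h1
        · omega
        · have : cum w (Nat.find h + 1) ≤ cum w (i:ℕ) :=
            cum_mono w hw (by omega)
          exact absurd (hfind.2.trans_le (this.trans h1)) (lt_irrefl t)
      have hps : psi hm w t = ⟨Nat.find h, hfind.1⟩ := by rw [psi, dif_pos h]
      rw [hps]; exact Fin.ext (show Nat.find h = (i:ℕ) by omega)
  · push_neg at h
    have ht1 : cum w m ≤ t := by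
      have := h (m-1) (Nat.sub_lt hm one_pos)
      have he : (m-1)+1 = m := by omega
      rwa [he] at this
    have hpsi : psi hm w t = ⟨m-1, Nat.sub_lt hm one_pos⟩ := by
      rw [psi, dif_neg (by push_neg; exact h)]
    constructor
    · intro he
      rw [hpsi] at he
      constructor
      · right
        rw [← he]
        calc cum w ((⟨m-1, Nat.sub_lt hm one_pos⟩ : Fin m) : ℕ)
            ≤ cum w m := cum_mono w hw (by simp)
          _ ≤ t := ht1
      · left; rw [← he]
    · rintro ⟨_, h2⟩
      rcases h2 with h2 | h2
      · rw [hpsi]; exact (Fin.ext h2.symm)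
      · have : cum w ((i:ℕ)+1) ≤ cum w m := cum_mono w hw i.is_lt
        exact absurd (h2.trans_le (this.trans ht1)) (lt_irrefl t)

lemma psi_preimage (hm : 0 < m) (w : Fin m → ℝ) (hw : ∀ i, 0 ≤ w i)
    (hsum : ∑ i, w i = 1) (i : Fin m) :
    psi hm w ⁻¹' {i} =
      {t : ℝ | (i:ℕ) = 0 ∨ cum w i ≤ t} ∩ {t : ℝ | (i:ℕ) = m-1 ∨ t < cum w ((i:ℕ)+1)} := by
  ext t
  simp only [Set.mem_preimage, Set.mem_singleton_iff, Set.mem_inter_iff, Set.mem_setOf_eq]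
  exact psi_eq_iff hm w hw hsum t i

lemma psi_measurable (hm : 0 < m) (w : Fin m → ℝ) (hw : ∀ i, 0 ≤ w i)
    (hsum : ∑ i, w i = 1) : Measurable (psi hm w) := by
  apply measurable_to_countable
  intro t
  show MeasurableSet (psi hm w ⁻¹' {psi hm w t})
  rw [psi_preimage hm w hw hsum]
  apply MeasurableSet.inter
  · by_cases h : ((psi hm w t : ℕ) = 0)
    · simp [h]
    · have : {x : ℝ | (psi hm w t : ℕ) = 0 ∨ cum w (psi hm w t) ≤ x} = Set.Ici (cum w (psi hm w t)) := by
        ext x; simp [h]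
      rw [this]; exact measurableSet_Ici
  · by_cases h : ((psi hm w t : ℕ) = m-1)
    · simp [h]
    · have : {x : ℝ | (psi hm w t : ℕ) = m-1 ∨ x < cum w ((psi hm w t : ℕ)+1)}
          = Set.Iio (cum w ((psi hm w t : ℕ)+1)) := by
        ext x; simp [h]
      rw [this]; exact measurableSet_Iio

lemma psi_measure (hm : 0 < m) (w : Fin m → ℝ) (hw : ∀ i, 0 ≤ w i)
    (hsum : ∑ i, w i = 1) (i : Fin m) :
    volume {t ∈ Set.Icc (0:ℝ) 1 | psi hm w t = i} = ENNReal.ofReal (w i) := by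
  have hcm : cum w m = 1 := by rw [cum_top, hsum]
  have hci : 0 ≤ cum w i := cum_nonneg w hw _
  have hci1 : cum w ((i:ℕ)+1) ≤ 1 := cum_le_one w hw hsum i.is_lt
  have hwi : cum w ((i:ℕ)+1) - cum w i = w i := by rw [cum_succ]; ring
  by_cases h : ((i:ℕ) = m-1)
  · have hi1 : (i:ℕ)+1 = m := by omega
    have hset : {t ∈ Set.Icc (0:ℝ) 1 | psi hm w t = i} = Set.Icc (cum w i) 1 := by
      ext t
      simp only [Set.mem_setOf_eq, Set.mem_Icc, psi_eq_iff hm w hw hsum t i]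
      constructor
      · rintro ⟨⟨ht0, ht1⟩, hc1, _⟩
        refine ⟨?_, ht1⟩
        rcases hc1 with hc1 | hc1
        · rw [hc1, cum_zero]; exact ht0
        · exact hc1
      · rintro ⟨h1, h2⟩
        exact ⟨⟨hci.trans h1, h2⟩, Or.inr h1, Or.inl h⟩
    rw [hset, Real.volume_Icc]
    congr 1
    rw [← hwi, hi1, hcm]
  · have hset : {t ∈ Set.Icc (0:ℝ) 1 | psi hm w t = i}
        = Set.Ico (cum w i) (cum w ((i:ℕ)+1)) := by
      ext t
      simp only [Set.mem_setOf_eq, Set.mem_Icc, Set.mem_Ico, psi_eq_iff hm w hw hsum t i]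
      constructor
      · rintro ⟨⟨ht0, ht1⟩, hc1, hc2⟩
        refine ⟨?_, ?_⟩
        · rcases hc1 with hc1 | hc1
          · rw [hc1, cum_zero]; exact ht0
          · exact hc1
        · rcases hc2 with hc2 | hc2
          · exact absurd hc2 h
          · exact hc2
      · rintro ⟨h1, h2⟩
        exact ⟨⟨hci.trans h1, (h2.le.trans hci1)⟩, Or.inr h1, Or.inr h2⟩
    rw [hset, Real.volume_Ico, hwi]

lemma cum_close (w₁ w₂ : Fin m → ℝ) {δ : ℝ} (hδ : ∀ i, |w₁ i - w₂ i| ≤ δ) (k : ℕ) :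
    |cum w₁ k - cum w₂ k| ≤ m * δ := by
  have : cum w₁ k - cum w₂ k = ∑ i : Fin m, if (i:ℕ) < k then w₁ i - w₂ i else 0 := by
    rw [cum, cum, ← Finset.sum_sub_distrib]
    apply Finset.sum_congr rfl
    intro i _
    by_cases h : (i:ℕ) < k <;> simp [h]
  rw [this]
  calc |∑ i : Fin m, if (i:ℕ) < k then w₁ i - w₂ i else 0|
      ≤ ∑ i : Fin m, |if (i:ℕ) < k then w₁ i - w₂ i else 0| :=
        Finset.abs_sum_le_sum_abs _ _
    _ ≤ ∑ _i : Fin m, δ := by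
        apply Finset.sum_le_sum
        intro i _
        by_cases h : (i:ℕ) < k
        · simpa [h] using hδ i
        · simp [h]
          exact le_trans (abs_nonneg _) (hδ i)
    _ = m * δ := by simp [Finset.sum_const, mul_comm]


lemma ne_boundary (hm : 0 < m) (w₁ w₂ : Fin m → ℝ)
    (hw₁ : ∀ i, 0 ≤ w₁ i) (hw₂ : ∀ i, 0 ≤ w₂ i)
    (hs₁ : ∑ i, w₁ i = 1) (hs₂ : ∑ i, w₂ i = 1)
    {δ : ℝ} (hδ0 : 0 ≤ δ) (hδ : ∀ i, |w₁ i - w₂ i| ≤ δ)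
    {t : ℝ} (hne : psi hm w₁ t ≠ psi hm w₂ t) :
    ∃ k ∈ Finset.Ico 1 m, |t - cum w₁ k| ≤ m * δ := by
  have hmδ : 0 ≤ (m:ℝ) * δ := mul_nonneg (Nat.cast_nonneg m) hδ0
  set i := psi hm w₁ t with hi
  set j := psi hm w₂ t with hj
  have C1 := (psi_eq_iff hm w₁ hw₁ hs₁ t i).mp rfl
  have C2 := (psi_eq_iff hm w₂ hw₂ hs₂ t j).mp rfl
  rcases lt_trichotomy (i:ℕ) (j:ℕ) with hlt | heq | hgt
  · refine ⟨(i:ℕ)+1, Finset.mem_Ico.mpr ⟨by omega, by have := j.is_lt; omega⟩, ?_⟩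
    have h1 : t < cum w₁ ((i:ℕ)+1) := by
      rcases C1.2 with h | h
      · exfalso; have := j.is_lt; omega
      · exact h
    have h2 : cum w₂ (j:ℕ) ≤ t := by
      rcases C2.1 with h | h
      · exfalso; omega
      · exact h
    have h3 : cum w₂ ((i:ℕ)+1) ≤ cum w₂ (j:ℕ) := cum_mono w₂ hw₂ (by omega)
    have h4 : |cum w₁ ((i:ℕ)+1) - cum w₂ ((i:ℕ)+1)| ≤ m * δ := cum_close w₁ w₂ hδ _
    rw [abs_le] at h4 ⊢
    constructor <;> linarith [h4.1, h4.2]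
  · exact absurd (Fin.ext heq) hne
  · refine ⟨(i:ℕ), Finset.mem_Ico.mpr ⟨by omega, i.is_lt⟩, ?_⟩
    have h1 : cum w₁ (i:ℕ) ≤ t := by
      rcases C1.1 with h | h
      · exfalso; omega
      · exact h
    have h2 : t < cum w₂ ((j:ℕ)+1) := by
      rcases C2.2 with h | h
      · exfalso; have := i.is_lt; omega
      · exact h
    have h3 : cum w₂ ((j:ℕ)+1) ≤ cum w₂ (i:ℕ) := cum_mono w₂ hw₂ (by omega)
    have h4 : |cum w₁ (i:ℕ) - cum w₂ (i:ℕ)| ≤ m * δ := cum_close w₁ w₂ hδ _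
    rw [abs_le] at h4 ⊢
    constructor <;> linarith [h4.1, h4.2]

end FMC


open FMC in
/-- (Lemma `h2`.)  For every `m > 0` and `ε > 0` there is `δ > 0` such that
any two `[0,1]`-valued pseudometric probability spaces on the same `m`-point set whose
distances and weights differ by at most `δ` entrywise are at `□̲₁`-distance at most `ε`:
there are measure-preserving Borel maps `Ψ₁, Ψ₂ : ([0,1], λ) → Fin m` (pushing Lebesgue
measure to the respective weights) and a Borel set `S ⊆ [0,1]` with `λ S ≤ ε` such that
`|d_G(Ψ₁ x, Ψ₁ y) - d_H(Ψ₂ x, Ψ₂ y)| ≤ ε` off `S`. -/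
theorem finite_mm_spaces_close
    (m : ℕ) (hm : 0 < m) (ε : ℝ) (hε : 0 < ε) :
    ∃ δ : ℝ, 0 < δ ∧
      ∀ (dG dH : Fin m → Fin m → ℝ) (w₁ w₂ : Fin m → ℝ),
        (∀ i j, dG i j ∈ Set.Icc (0:ℝ) 1) → (∀ i j, dH i j ∈ Set.Icc (0:ℝ) 1) →
        (∀ i, dG i i = 0) → (∀ i, dH i i = 0) →
        (∀ i j, dG i j = dG j i) → (∀ i j, dH i j = dH j i) →
        (∀ i j l, dG i l ≤ dG i j + dG j l) → (∀ i j l, dH i l ≤ dH i j + dH j l) →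
        (∀ i, 0 ≤ w₁ i) → (∀ i, 0 ≤ w₂ i) →
        (∑ i, w₁ i = 1) → (∑ i, w₂ i = 1) →
        (∀ i, |w₁ i - w₂ i| ≤ δ) →
        (∀ i j, |dG i j - dH i j| ≤ δ) →
        ∃ (Ψ₁ Ψ₂ : ℝ → Fin m) (S : Set ℝ),
          Measurable Ψ₁ ∧ Measurable Ψ₂ ∧
          (∀ i, volume {t ∈ Set.Icc (0:ℝ) 1 | Ψ₁ t = i} = ENNReal.ofReal (w₁ i)) ∧
          (∀ i, volume {t ∈ Set.Icc (0:ℝ) 1 | Ψ₂ t = i} = ENNReal.ofReal (w₂ i)) ∧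
          MeasurableSet S ∧ S ⊆ Set.Icc (0:ℝ) 1 ∧ volume S ≤ ENNReal.ofReal ε ∧
          ∀ t ∈ Set.Icc (0:ℝ) 1 \ S, ∀ s ∈ Set.Icc (0:ℝ) 1 \ S,
            |dG (Ψ₁ t) (Ψ₁ s) - dH (Ψ₂ t) (Ψ₂ s)| ≤ ε := by
  set δ : ℝ := ε / (2 * (m:ℝ)^2 + 1) with hδdef
  have hden : (0:ℝ) < 2 * (m:ℝ)^2 + 1 := by positivity
  have hδpos : 0 < δ := div_pos hε hden
  have hδε : δ * (2 * (m:ℝ)^2 + 1) = ε := div_mul_cancel₀ ε hden.ne'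
  refine ⟨δ, hδpos, ?_⟩
  intro dG dH w₁ w₂ _ _ _ _ _ _ _ _ hw₁ hw₂ hs₁ hs₂ hwδ hdδ
  refine ⟨psi hm w₁, psi hm w₂,
    {t ∈ Set.Icc (0:ℝ) 1 | psi hm w₁ t ≠ psi hm w₂ t},
    psi_measurable hm w₁ hw₁ hs₁, psi_measurable hm w₂ hw₂ hs₂,
    psi_measure hm w₁ hw₁ hs₁, psi_measure hm w₂ hw₂ hs₂, ?_, ?_, ?_, ?_⟩
  · have heq : {t ∈ Set.Icc (0:ℝ) 1 | psi hm w₁ t ≠ psi hm w₂ t}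
        = Set.Icc (0:ℝ) 1 ∩ (⋃ i : Fin m, psi hm w₁ ⁻¹' {i} ∩ psi hm w₂ ⁻¹' {i})ᶜ := by
      ext t
      simp only [Set.mem_setOf_eq, Set.mem_inter_iff, Set.mem_compl_iff, Set.mem_iUnion,
        Set.mem_inter_iff, Set.mem_preimage, Set.mem_singleton_iff, not_exists, not_and]
      constructor
      · rintro ⟨h1, h2⟩
        exact ⟨h1, fun i e1 e2 => h2 (e1.trans e2.symm)⟩
      · rintro ⟨h1, h2⟩
        exact ⟨h1, fun e => h2 (psi hm w₁ t) rfl e.symm⟩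
    rw [heq]
    exact measurableSet_Icc.inter (MeasurableSet.iUnion fun i =>
      ((psi_measurable hm w₁ hw₁ hs₁ (measurableSet_singleton i)).inter
       (psi_measurable hm w₂ hw₂ hs₂ (measurableSet_singleton i)))).compl
  · intro t ht; exact ht.1
  · have hsub : {t ∈ Set.Icc (0:ℝ) 1 | psi hm w₁ t ≠ psi hm w₂ t}
        ⊆ ⋃ k ∈ Finset.Ico 1 m, Set.Icc (cum w₁ k - m*δ) (cum w₁ k + m*δ) := by
      rintro t ⟨_, hne⟩
      obtain ⟨k, hk, hkle⟩ := ne_boundary hm w₁ w₂ hw₁ hw₂ hs₁ hs₂ hδpos.le hwδ hne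
      rw [abs_le] at hkle
      exact Set.mem_biUnion hk ⟨by linarith [hkle.1], by linarith [hkle.2]⟩
    calc volume {t ∈ Set.Icc (0:ℝ) 1 | psi hm w₁ t ≠ psi hm w₂ t}
        ≤ volume (⋃ k ∈ Finset.Ico 1 m, Set.Icc (cum w₁ k - m*δ) (cum w₁ k + m*δ)) :=
          measure_mono hsub
      _ ≤ ∑ k ∈ Finset.Ico 1 m, volume (Set.Icc (cum w₁ k - m*δ) (cum w₁ k + m*δ)) :=
          measure_biUnion_finset_le _ _
      _ = ∑ _k ∈ Finset.Ico 1 m, ENNReal.ofReal (2 * ((m:ℝ)*δ)) := by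
          apply Finset.sum_congr rfl
          intro k _
          rw [Real.volume_Icc]
          congr 1
          ring
      _ = ((m-1 : ℕ) : ENNReal) * ENNReal.ofReal (2 * ((m:ℝ)*δ)) := by
          rw [Finset.sum_const, Nat.card_Ico, nsmul_eq_mul]
      _ ≤ ENNReal.ofReal ε := by
          rw [← ENNReal.ofReal_natCast (m-1), ← ENNReal.ofReal_mul (Nat.cast_nonneg _)]
          apply ENNReal.ofReal_le_ofReal
          have h1 : ((m-1:ℕ):ℝ) ≤ (m:ℝ) := by
            have : (m-1:ℕ) ≤ m := Nat.sub_le m 1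
            exact_mod_cast this
          have h2 : 0 ≤ 2 * ((m:ℝ)*δ) := by positivity
          calc ((m-1:ℕ):ℝ) * (2 * ((m:ℝ)*δ)) ≤ (m:ℝ) * (2 * ((m:ℝ)*δ)) :=
                mul_le_mul_of_nonneg_right h1 h2
            _ = 2 * (m:ℝ)^2 * δ := by ring
            _ ≤ ε := by nlinarith [hδpos.le]
  · intro t ht s hs
    have het : psi hm w₁ t = psi hm w₂ t := by
      by_contra hne
      exact ht.2 ⟨ht.1, hne⟩
    have hes : psi hm w₁ s = psi hm w₂ s := by
      by_contra hne
      exact hs.2 ⟨hs.1, hne⟩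
    rw [het, hes]
    refine (hdδ _ _).trans ?_
    rw [hδdef]
    rw [div_le_iff₀ hden]
    nlinarith [hε.le]
end

section
/- Fix r ≥ 1, K > 0 and for each pair 1 ≤ i ≤ j ≤ r a K-Lipschitz function g_{ij} : [0,1] → ℝ. For every ε > 0 there exists δ > 0 with the following property. Let f₁, f₂ : [0,1]² → P([0,1]) be Borel measurable maps into the space P([0,1]) of Borel probability measures on [0,1] with its weak topology, and suppose there is a Borel set S ⊆ [0,1] with λ(S) ≤ δ such that for all x, y ∈ [0,1] \ S, sup{ |∫ h df₁(x,y) − ∫ h df₂(x,y)| : h : [0,1] → ℝ 1-Lipschitz } ≤ δ. Then |t(g, f₁) − t(g, f₂)| < ε. -/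
open MeasureTheory

/-- The moment `t(g, f)` of a probability-measure-valued kernel `f` on `[0,1]²`:
`∫_{[0,1]^r} ∏_{i ≤ j} (∫ g_{ij} d f(x_i, x_j)) dλ^r`. -/
noncomputable def momentT (r : ℕ) (g : Fin r → Fin r → ℝ → ℝ)
    (f : ℝ → ℝ → Measure ℝ) : ℝ :=
  ∫ x : Fin r → ℝ,
      (∏ p ∈ Finset.univ.filter (fun p : Fin r × Fin r => p.1 ≤ p.2),
        ∫ t, g p.1 p.2 t ∂(f (x p.1) (x p.2)))
    ∂(Measure.pi fun _ : Fin r => volume.restrict (Set.Icc (0:ℝ) 1))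

/-- Difference of products bound. -/
lemma prodDiffLe {ι : Type*} [DecidableEq ι] (s : Finset ι) (a b : ι → ℝ) (M : ℝ) (hM : 1 ≤ M)
    (ha : ∀ p ∈ s, |a p| ≤ M) (hb : ∀ p ∈ s, |b p| ≤ M) :
    |∏ p ∈ s, a p - ∏ p ∈ s, b p| ≤ M ^ s.card * ∑ p ∈ s, |a p - b p| := by
  have hM0 : (0:ℝ) ≤ M := zero_le_one.trans hM
  induction s using Finset.induction_on with
  | empty => simp
  | @insert i s hi ih =>
    have ha' : ∀ p ∈ s, |a p| ≤ M := fun p hp => ha p (Finset.mem_insert_of_mem hp)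
    have hb' : ∀ p ∈ s, |b p| ≤ M := fun p hp => hb p (Finset.mem_insert_of_mem hp)
    have IH := ih ha' hb'
    rw [Finset.prod_insert hi, Finset.prod_insert hi, Finset.sum_insert hi,
      Finset.card_insert_of_notMem hi]
    set A := ∏ p ∈ s, a p
    set B := ∏ p ∈ s, b p
    have hA : |A| ≤ M ^ s.card := by
      rw [Finset.abs_prod]
      calc ∏ p ∈ s, |a p| ≤ ∏ p ∈ s, M :=
            Finset.prod_le_prod (fun p _ => abs_nonneg _) (fun p hp => ha' p hp)
        _ = M ^ s.card := Finset.prod_const M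
    have key : a i * A - b i * B = (a i - b i) * A + b i * (A - B) := by ring
    have h1 : |a i * A - b i * B| ≤ |a i - b i| * |A| + |b i| * |A - B| := by
      rw [key]
      calc |(a i - b i) * A + b i * (A - B)| ≤ |(a i - b i) * A| + |b i * (A - B)| :=
            abs_add_le _ _
        _ = |a i - b i| * |A| + |b i| * |A - B| := by rw [abs_mul, abs_mul]
    have hbi : |b i| ≤ M := hb i (Finset.mem_insert_self i s)
    have hpow1 : (1:ℝ) ≤ M ^ s.card := one_le_pow₀ hM
    have hpow0 : (0:ℝ) ≤ M ^ s.card := zero_le_one.trans hpow1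
    have hsum0 : (0:ℝ) ≤ ∑ p ∈ s, |a p - b p| :=
      Finset.sum_nonneg fun p _ => abs_nonneg _
    have habi : (0:ℝ) ≤ |a i - b i| := abs_nonneg _
    have hAB : (0:ℝ) ≤ |A - B| := abs_nonneg _
    calc |a i * A - b i * B| ≤ |a i - b i| * |A| + |b i| * |A - B| := h1
      _ ≤ |a i - b i| * M ^ s.card + M * (M ^ s.card * ∑ p ∈ s, |a p - b p|) := by
          have t1 : |a i - b i| * |A| ≤ |a i - b i| * M ^ s.card :=
            mul_le_mul_of_nonneg_left hA habi
          have t2 : |b i| * |A - B| ≤ M * (M ^ s.card * ∑ p ∈ s, |a p - b p|) :=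
            mul_le_mul hbi IH hAB hM0
          linarith
      _ ≤ M ^ (s.card + 1) * (|a i - b i| + ∑ p ∈ s, |a p - b p|) := by
          rw [pow_succ]
          nlinarith [mul_le_mul_of_nonneg_left hM habi]

/-- Boundedness of the integral of `g` against a probability measure supported on `[0,1]`. -/
lemma absIntegralLe (μ : Measure ℝ) [IsProbabilityMeasure μ]
    (hμ : μ (Set.Icc (0:ℝ) 1)ᶜ = 0) (g : ℝ → ℝ) (M : ℝ)
    (hb : ∀ t ∈ Set.Icc (0:ℝ) 1, |g t| ≤ M) : |∫ t, g t ∂μ| ≤ M := by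
  have hae : ∀ᵐ t ∂μ, t ∈ Set.Icc (0:ℝ) 1 := by
    rw [ae_iff]
    exact hμ
  have h := norm_integral_le_of_norm_le_const (μ := μ) (f := g) (C := M)
    (by filter_upwards [hae] with t ht using by simpa [Real.norm_eq_abs] using hb t ht)
  simpa [Real.norm_eq_abs, measure_univ] using h

/-- Measurability of `q ↦ ∫ g d(f q.1 q.2)` for a measurable kernel `f`. -/
lemma stronglyMeasurableInner (f : ℝ → ℝ → Measure ℝ)
    (hf : Measurable (Function.uncurry f))
    (hp : ∀ x y, IsProbabilityMeasure (f x y)) (g0 : ℝ → ℝ) (hg0 : Continuous g0) :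
    StronglyMeasurable (fun q : ℝ × ℝ => ∫ t, g0 t ∂(f q.1 q.2)) := by
  let κ : ProbabilityTheory.Kernel (ℝ × ℝ) ℝ := ⟨Function.uncurry f, hf⟩
  haveI : ProbabilityTheory.IsMarkovKernel κ := ⟨fun a => hp a.1 a.2⟩
  have h : StronglyMeasurable (Function.uncurry (fun (_ : ℝ × ℝ) (t : ℝ) => g0 t)) :=
    (hg0.comp continuous_snd).stronglyMeasurable
  exact MeasureTheory.StronglyMeasurable.integral_kernel_prod_right (κ := κ) h

/-- Rescaling the 1-Lipschitz test-function bound to `K`-Lipschitz functions. -/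
lemma lipDiffLe (μ₁ μ₂ : Measure ℝ) (K : NNReal) (hK : 0 < K) (g0 : ℝ → ℝ)
    (hg0 : LipschitzWith K g0) (δ : ℝ)
    (h : ∀ h : ℝ → ℝ, LipschitzWith 1 h → |(∫ t, h t ∂μ₁) - ∫ t, h t ∂μ₂| ≤ δ) :
    |(∫ t, g0 t ∂μ₁) - ∫ t, g0 t ∂μ₂| ≤ (K : ℝ) * δ := by
  have hKpos : (0:ℝ) < (K:ℝ) := hK
  set c : ℝ := (K:ℝ)⁻¹ with hc
  have hcpos : 0 < c := inv_pos.mpr hKpos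
  have hcK : c * (K:ℝ) = 1 := inv_mul_cancel₀ (ne_of_gt hKpos)
  have hlip : LipschitzWith 1 (fun t => c * g0 t) := by
    apply LipschitzWith.of_dist_le_mul
    intro x y
    have hg := hg0.dist_le_mul x y
    rw [Real.dist_eq, Real.dist_eq] at *
    calc |c * g0 x - c * g0 y| = c * |g0 x - g0 y| := by
          rw [← mul_sub, abs_mul, abs_of_pos hcpos]
      _ ≤ c * ((K:ℝ) * |x - y|) := mul_le_mul_of_nonneg_left hg hcpos.le
      _ = 1 * |x - y| := by rw [← mul_assoc, hcK]
  have h2 := h _ hlip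
  rw [MeasureTheory.integral_const_mul, MeasureTheory.integral_const_mul, ← mul_sub, abs_mul, abs_of_pos hcpos] at h2
  calc |(∫ t, g0 t ∂μ₁) - ∫ t, g0 t ∂μ₂|
      = (K:ℝ) * (c * |(∫ t, g0 t ∂μ₁) - ∫ t, g0 t ∂μ₂|) := by
        rw [← mul_assoc, mul_comm (K:ℝ) c, hcK, one_mul]
    _ ≤ (K:ℝ) * δ := mul_le_mul_of_nonneg_left h2 hKpos.le

set_option maxHeartbeats 2000000 in
/-- (Lemma `lcs1`.)  Fix `r ≥ 1`, `K > 0` and `K`-Lipschitz functions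
`g_{ij}`.  For every `ε > 0` there is `δ > 0` such that whenever two Borel kernels
`f₁, f₂ : [0,1]² → P([0,1])` satisfy `d_ext(f₁(x,y), f₂(x,y)) ≤ δ` outside a set
`S × [0,1] ∪ [0,1] × S` with `λ S ≤ δ` (i.e. `□₁(f₁, f₂) ≤ δ`), then
`|t(g, f₁) - t(g, f₂)| < ε`. -/
theorem momentT_continuous_in_cut_distance
    (r : ℕ) (hr : 1 ≤ r) (K : NNReal) (hK : 0 < K)
    (g : Fin r → Fin r → ℝ → ℝ) (hg : ∀ i j, LipschitzWith K (g i j))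
    (ε : ℝ) (hε : 0 < ε) :
    ∃ δ : ℝ, 0 < δ ∧
      ∀ f₁ f₂ : ℝ → ℝ → Measure ℝ,
        Measurable (Function.uncurry f₁) → Measurable (Function.uncurry f₂) →
        (∀ x y, IsProbabilityMeasure (f₁ x y)) →
        (∀ x y, IsProbabilityMeasure (f₂ x y)) →
        (∀ x y, f₁ x y (Set.Icc (0:ℝ) 1)ᶜ = 0) →
        (∀ x y, f₂ x y (Set.Icc (0:ℝ) 1)ᶜ = 0) →
        (∃ S : Set ℝ, MeasurableSet S ∧ volume S ≤ ENNReal.ofReal δ ∧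
          ∀ x ∈ Set.Icc (0:ℝ) 1 \ S, ∀ y ∈ Set.Icc (0:ℝ) 1 \ S,
            ∀ h : ℝ → ℝ, LipschitzWith 1 h →
              |(∫ t, h t ∂(f₁ x y)) - ∫ t, h t ∂(f₂ x y)| ≤ δ) →
        |momentT r g f₁ - momentT r g f₂| < ε := by
  set P : Finset (Fin r × Fin r) :=
    Finset.univ.filter (fun p : Fin r × Fin r => p.1 ≤ p.2) with hP
  set N : ℕ := P.card with hN
  set M : ℝ := 1 + (∑ p ∈ (Finset.univ : Finset (Fin r × Fin r)), |g p.1 p.2 0|) + (K:ℝ)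
    with hM
  have hKpos : (0:ℝ) < (K:ℝ) := hK
  have hsum0 : (0:ℝ) ≤ ∑ p ∈ (Finset.univ : Finset (Fin r × Fin r)), |g p.1 p.2 0| :=
    Finset.sum_nonneg fun p _ => abs_nonneg _
  have hM1 : (1:ℝ) ≤ M := by rw [hM]; linarith
  have hM0 : (0:ℝ) ≤ M := zero_le_one.trans hM1
  have hMN1 : (1:ℝ) ≤ M ^ N := one_le_pow₀ hM1
  have hMN0 : (0:ℝ) ≤ M ^ N := zero_le_one.trans hMN1
  -- the uniform bound on g on [0,1]
  have hgb : ∀ (i j : Fin r), ∀ t ∈ Set.Icc (0:ℝ) 1, |g i j t| ≤ M := by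
    intro i j t ht
    have hd := (hg i j).dist_le_mul t 0
    rw [Real.dist_eq, Real.dist_eq, sub_zero] at hd
    have htabs : |t| ≤ 1 := by
      rw [abs_le]; exact ⟨by linarith [ht.1], ht.2⟩
    have h1 : |g i j t| ≤ |g i j t - g i j 0| + |g i j 0| := by
      calc |g i j t| = |(g i j t - g i j 0) + g i j 0| := by ring_nf
        _ ≤ |g i j t - g i j 0| + |g i j 0| := abs_add_le _ _
    have h2 : |g i j 0| ≤ ∑ p ∈ (Finset.univ : Finset (Fin r × Fin r)), |g p.1 p.2 0| :=
      Finset.single_le_sum (f := fun p : Fin r × Fin r => |g p.1 p.2 0|)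
        (fun p _ => abs_nonneg _) (Finset.mem_univ (i, j))
    have h3 : (K:ℝ) * |t| ≤ (K:ℝ) := by
      calc (K:ℝ) * |t| ≤ (K:ℝ) * 1 := mul_le_mul_of_nonneg_left htabs hKpos.le
        _ = (K:ℝ) := mul_one _
    rw [hM]; linarith
  -- choice of δ
  set C : ℝ := M ^ N * N * (K:ℝ) + 2 * M ^ N * r with hC
  have hC0 : 0 ≤ C := by
    have h1 : (0:ℝ) ≤ M ^ N * N * (K:ℝ) :=
      mul_nonneg (mul_nonneg hMN0 (Nat.cast_nonneg _)) hKpos.le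
    have h2 : (0:ℝ) ≤ 2 * M ^ N * r :=
      mul_nonneg (mul_nonneg (by norm_num) hMN0) (Nat.cast_nonneg _)
    rw [hC]; linarith
  have hden : (0:ℝ) < 2 * (C + 1) := by linarith
  refine ⟨ε / (2 * (C + 1)), div_pos hε hden, ?_⟩
  set δ : ℝ := ε / (2 * (C + 1)) with hδdef
  have hδpos : 0 < δ := div_pos hε hden
  intro f₁ f₂ hf₁ hf₂ hp₁ hp₂ hs₁ hs₂ hSex
  obtain ⟨S, hSm, hSμ, hS⟩ := hSex
  -- the ambient measure
  haveI hprob1 : IsProbabilityMeasure (volume.restrict (Set.Icc (0:ℝ) 1)) := by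
    constructor
    simp [Real.volume_Icc]
  set μ : Measure (Fin r → ℝ) :=
    Measure.pi fun _ : Fin r => volume.restrict (Set.Icc (0:ℝ) 1) with hμdef
  haveI : IsProbabilityMeasure μ := by rw [hμdef]; infer_instance
  -- the two integrands
  set F₁ : (Fin r → ℝ) → ℝ := fun x =>
    ∏ p ∈ P, ∫ t, g p.1 p.2 t ∂(f₁ (x p.1) (x p.2)) with hF₁
  set F₂ : (Fin r → ℝ) → ℝ := fun x =>
    ∏ p ∈ P, ∫ t, g p.1 p.2 t ∂(f₂ (x p.1) (x p.2)) with hF₂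
  -- measurability
  have hmeas : ∀ (f : ℝ → ℝ → Measure ℝ), Measurable (Function.uncurry f) →
      (∀ x y, IsProbabilityMeasure (f x y)) →
      StronglyMeasurable (fun x : Fin r → ℝ =>
        ∏ p ∈ P, ∫ t, g p.1 p.2 t ∂(f (x p.1) (x p.2))) := by
    intro f hf hp
    apply Finset.stronglyMeasurable_fun_prod
    intro p _
    have h1 := stronglyMeasurableInner f hf hp (g p.1 p.2) (hg p.1 p.2).continuous
    have hm : Measurable fun x : Fin r → ℝ => (x p.1, x p.2) :=
      (measurable_pi_apply p.1).prodMk (measurable_pi_apply p.2)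
    exact h1.comp_measurable hm
  have hF₁m : StronglyMeasurable F₁ := hmeas f₁ hf₁ hp₁
  have hF₂m : StronglyMeasurable F₂ := hmeas f₂ hf₂ hp₂
  -- pointwise bound
  have hbound : ∀ (f : ℝ → ℝ → Measure ℝ), (∀ x y, IsProbabilityMeasure (f x y)) →
      (∀ x y, f x y (Set.Icc (0:ℝ) 1)ᶜ = 0) →
      ∀ x : Fin r → ℝ, |∏ p ∈ P, ∫ t, g p.1 p.2 t ∂(f (x p.1) (x p.2))| ≤ M ^ N := by
    intro f hp hs x
    rw [Finset.abs_prod]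
    calc ∏ p ∈ P, |∫ t, g p.1 p.2 t ∂(f (x p.1) (x p.2))| ≤ ∏ p ∈ P, M := by
          apply Finset.prod_le_prod (fun p _ => abs_nonneg _)
          intro p _
          haveI := hp (x p.1) (x p.2)
          exact absIntegralLe _ (hs (x p.1) (x p.2)) _ M (hgb p.1 p.2)
      _ = M ^ N := Finset.prod_const M
  have hF₁b : ∀ x, |F₁ x| ≤ M ^ N := hbound f₁ hp₁ hs₁
  have hF₂b : ∀ x, |F₂ x| ≤ M ^ N := hbound f₂ hp₂ hs₂
  -- integrability
  have hint : ∀ (F : (Fin r → ℝ) → ℝ), StronglyMeasurable F → (∀ x, |F x| ≤ M ^ N) →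
      Integrable F μ := by
    intro F hFm hFb
    exact (integrable_const (M ^ N)).mono' hFm.aestronglyMeasurable
      (Filter.Eventually.of_forall fun x => by simpa [Real.norm_eq_abs] using hFb x)
  have hF₁int : Integrable F₁ μ := hint _ hF₁m hF₁b
  have hF₂int : Integrable F₂ μ := hint _ hF₂m hF₂b
  have hFdiffint : Integrable (fun x => F₁ x - F₂ x) μ := hF₁int.sub hF₂int
  -- the bad set
  set B : Set (Fin r → ℝ) := ⋃ i : Fin r, (Function.eval i) ⁻¹' S with hB
  have hBm : MeasurableSet B :=
    MeasurableSet.iUnion fun i => (measurable_pi_apply i) hSm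
  -- measure of B
  have hev : ∀ i : Fin r, μ ((Function.eval i) ⁻¹' S) ≤ ENNReal.ofReal δ := by
    intro i
    have h1 : (Function.eval i) ⁻¹' S =
        Set.pi Set.univ (Function.update (fun _ : Fin r => (Set.univ : Set ℝ)) i S) :=
      (Set.univ_pi_update_univ (α := fun _ : Fin r => ℝ) i S).symm
    rw [hμdef, h1, Measure.pi_pi]
    have h2 : ∀ j : Fin r,
        (volume.restrict (Set.Icc (0:ℝ) 1))
          (Function.update (fun _ : Fin r => (Set.univ : Set ℝ)) i S j) ≤
          (if j = i then ENNReal.ofReal δ else 1) := by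
      intro j
      by_cases hj : j = i
      · subst hj
        simp only [Function.update_self, if_pos rfl]
        calc (volume.restrict (Set.Icc (0:ℝ) 1)) S = volume (S ∩ Set.Icc (0:ℝ) 1) :=
              Measure.restrict_apply hSm
          _ ≤ volume S := measure_mono Set.inter_subset_left
          _ ≤ ENNReal.ofReal δ := hSμ
      · rw [Function.update_of_ne hj, if_neg hj]
        simp [measure_univ]
    calc (∏ j : Fin r, (volume.restrict (Set.Icc (0:ℝ) 1))
            (Function.update (fun _ : Fin r => (Set.univ : Set ℝ)) i S j))
        ≤ ∏ j : Fin r, (if j = i then ENNReal.ofReal δ else 1) :=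
          Finset.prod_le_prod' fun j _ => h2 j
      _ = ENNReal.ofReal δ := by
          rw [Finset.prod_ite_eq' Finset.univ i (fun _ => ENNReal.ofReal δ)]
          simp
  have hμB : μ B ≤ ENNReal.ofReal (r * δ) := by
    calc μ B ≤ ∑' i : Fin r, μ ((Function.eval i) ⁻¹' S) := measure_iUnion_le _
      _ = ∑ i : Fin r, μ ((Function.eval i) ⁻¹' S) := tsum_fintype _
      _ ≤ ∑ _i : Fin r, ENNReal.ofReal δ := Finset.sum_le_sum fun i _ => hev i
      _ = r * ENNReal.ofReal δ := by simp [Finset.sum_const, nsmul_eq_mul]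
      _ = ENNReal.ofReal (r * δ) := by
          rw [ENNReal.ofReal_mul (show (0:ℝ) ≤ (r:ℝ) from Nat.cast_nonneg _)]
          simp [ENNReal.ofReal_natCast]
  have hμBr : (μ B).toReal ≤ r * δ :=
    ENNReal.toReal_le_of_le_ofReal
      (mul_nonneg (Nat.cast_nonneg _) hδpos.le) hμB
  -- a.e. all coordinates in [0,1]
  have hae : ∀ᵐ x ∂μ, ∀ i : Fin r, x i ∈ Set.Icc (0:ℝ) 1 := by
    rw [ae_all_iff]
    intro i
    have h0 : (volume.restrict (Set.Icc (0:ℝ) 1)) (Set.Icc (0:ℝ) 1)ᶜ = 0 := by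
      rw [Measure.restrict_apply measurableSet_Icc.compl]
      simp
    have h1 : μ ((Function.eval i) ⁻¹' (Set.Icc (0:ℝ) 1)ᶜ) = 0 := by
      rw [hμdef]
      exact Measure.pi_eval_preimage_null _ h0
    rw [ae_iff]
    exact h1
  -- the two set-integral bounds
  have hFdiffb : ∀ x, ‖F₁ x - F₂ x‖ ≤ 2 * M ^ N := by
    intro x
    rw [Real.norm_eq_abs]
    calc |F₁ x - F₂ x| ≤ |F₁ x| + |F₂ x| := abs_sub _ _
      _ ≤ 2 * M ^ N := by linarith [hF₁b x, hF₂b x]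
  have hbadB : ‖∫ x in B, (F₁ x - F₂ x) ∂μ‖ ≤ 2 * M ^ N * (μ B).toReal := by
    apply norm_setIntegral_le_of_norm_le_const_ae' (measure_lt_top _ _)
    exact Filter.Eventually.of_forall fun x _ => hFdiffb x
  -- good set bound
  have hgood : ∀ᵐ x ∂μ, x ∈ Bᶜ → ‖F₁ x - F₂ x‖ ≤ M ^ N * (N * ((K:ℝ) * δ)) := by
    filter_upwards [hae] with x hx hxB
    have hxS : ∀ i : Fin r, x i ∉ S := by
      intro i hi
      exact hxB (Set.mem_iUnion.mpr ⟨i, hi⟩)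
    have hpair : ∀ p ∈ P,
        |(∫ t, g p.1 p.2 t ∂(f₁ (x p.1) (x p.2))) -
          ∫ t, g p.1 p.2 t ∂(f₂ (x p.1) (x p.2))| ≤ (K:ℝ) * δ := by
      intro p _
      exact lipDiffLe _ _ K hK _ (hg p.1 p.2) δ
        (hS (x p.1) ⟨hx p.1, hxS p.1⟩ (x p.2) ⟨hx p.2, hxS p.2⟩)
    rw [Real.norm_eq_abs]
    have hprod := prodDiffLe P
      (fun p => ∫ t, g p.1 p.2 t ∂(f₁ (x p.1) (x p.2)))
      (fun p => ∫ t, g p.1 p.2 t ∂(f₂ (x p.1) (x p.2))) M hM1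
      (fun p _ => by
        haveI := hp₁ (x p.1) (x p.2)
        exact absIntegralLe _ (hs₁ (x p.1) (x p.2)) _ M (hgb p.1 p.2))
      (fun p _ => by
        haveI := hp₂ (x p.1) (x p.2)
        exact absIntegralLe _ (hs₂ (x p.1) (x p.2)) _ M (hgb p.1 p.2))
    have hsumle : (∑ p ∈ P,
        |(∫ t, g p.1 p.2 t ∂(f₁ (x p.1) (x p.2))) -
          ∫ t, g p.1 p.2 t ∂(f₂ (x p.1) (x p.2))|) ≤ N * ((K:ℝ) * δ) := by
      calc (∑ p ∈ P,
          |(∫ t, g p.1 p.2 t ∂(f₁ (x p.1) (x p.2))) -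
            ∫ t, g p.1 p.2 t ∂(f₂ (x p.1) (x p.2))|) ≤ ∑ _p ∈ P, (K:ℝ) * δ :=
            Finset.sum_le_sum hpair
        _ = N * ((K:ℝ) * δ) := by rw [Finset.sum_const, nsmul_eq_mul, hN]
    calc |F₁ x - F₂ x| ≤ M ^ N * ∑ p ∈ P,
          |(∫ t, g p.1 p.2 t ∂(f₁ (x p.1) (x p.2))) -
            ∫ t, g p.1 p.2 t ∂(f₂ (x p.1) (x p.2))| := hprod
      _ ≤ M ^ N * (N * ((K:ℝ) * δ)) := mul_le_mul_of_nonneg_left hsumle hMN0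
  have hgoodB : ‖∫ x in Bᶜ, (F₁ x - F₂ x) ∂μ‖ ≤ M ^ N * (N * ((K:ℝ) * δ)) := by
    have h1 : ‖∫ x in Bᶜ, (F₁ x - F₂ x) ∂μ‖ ≤
        M ^ N * (N * ((K:ℝ) * δ)) * (μ Bᶜ).toReal :=
      norm_setIntegral_le_of_norm_le_const_ae' (measure_lt_top _ _) hgood
    have h2 : (μ Bᶜ).toReal ≤ 1 := by
      have := prob_le_one (μ := μ) (s := Bᶜ)
      calc (μ Bᶜ).toReal ≤ (1 : ENNReal).toReal := ENNReal.toReal_mono ENNReal.one_ne_top this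
        _ = 1 := by simp
    have h3 : (0:ℝ) ≤ M ^ N * (N * ((K:ℝ) * δ)) :=
      mul_nonneg hMN0 (mul_nonneg (Nat.cast_nonneg _) (mul_nonneg hKpos.le hδpos.le))
    calc ‖∫ x in Bᶜ, (F₁ x - F₂ x) ∂μ‖ ≤ M ^ N * (N * ((K:ℝ) * δ)) * (μ Bᶜ).toReal := h1
      _ ≤ M ^ N * (N * ((K:ℝ) * δ)) * 1 := by
          exact mul_le_mul_of_nonneg_left h2 h3
      _ = M ^ N * (N * ((K:ℝ) * δ)) := mul_one _
  -- assemble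
  have hmom₁ : momentT r g f₁ = ∫ x, F₁ x ∂μ := by
    rw [hF₁, hμdef, hP]; rfl
  have hmom₂ : momentT r g f₂ = ∫ x, F₂ x ∂μ := by
    rw [hF₂, hμdef, hP]; rfl
  have hsplit : momentT r g f₁ - momentT r g f₂ =
      (∫ x in B, (F₁ x - F₂ x) ∂μ) + ∫ x in Bᶜ, (F₁ x - F₂ x) ∂μ := by
    rw [hmom₁, hmom₂, ← integral_sub hF₁int hF₂int]
    exact (integral_add_compl hBm hFdiffint).symm
  have hfinal : |momentT r g f₁ - momentT r g f₂| ≤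
      M ^ N * (N * ((K:ℝ) * δ)) + 2 * M ^ N * (r * δ) := by
    rw [hsplit]
    calc |(∫ x in B, (F₁ x - F₂ x) ∂μ) + ∫ x in Bᶜ, (F₁ x - F₂ x) ∂μ|
        ≤ |∫ x in B, (F₁ x - F₂ x) ∂μ| + |∫ x in Bᶜ, (F₁ x - F₂ x) ∂μ| := abs_add_le _ _
      _ ≤ 2 * M ^ N * (μ B).toReal + M ^ N * (N * ((K:ℝ) * δ)) := by
          rw [← Real.norm_eq_abs, ← Real.norm_eq_abs]
          linarith [hbadB, hgoodB]
      _ ≤ M ^ N * (N * ((K:ℝ) * δ)) + 2 * M ^ N * (r * δ) := by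
          have : 2 * M ^ N * (μ B).toReal ≤ 2 * M ^ N * (r * δ) :=
            mul_le_mul_of_nonneg_left hμBr
              (mul_nonneg (by norm_num) hMN0)
          linarith
  have hCδ : M ^ N * (N * ((K:ℝ) * δ)) + 2 * M ^ N * (r * δ) = δ * C := by
    rw [hC]; ring
  have hδC : δ * C < ε := by
    have h1 : δ * C < δ * (2 * (C + 1)) := by
      apply mul_lt_mul_of_pos_left _ hδpos
      linarith
    have h2 : δ * (2 * (C + 1)) = ε := by
      rw [hδdef]
      exact div_mul_cancel₀ ε (ne_of_gt hden)
    linarith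
  calc |momentT r g f₁ - momentT r g f₂|
      ≤ M ^ N * (N * ((K:ℝ) * δ)) + 2 * M ^ N * (r * δ) := hfinal
    _ = δ * C := hCδ
    _ < ε := hδC
end

section
/- Let {Y_{ij}}_{1 ≤ i < j} be independent random variables on a probability space (Ω, P), each with values in [0,1]; extend the array symmetrically by Y_{ji} = Y_{ij} and Y_{ii} = 0. Fix ε > 0. Then for P-almost every ω, lim_{n→∞} max over all pairs of subsets A, B ⊆ {1,…,n} with |A| ≥ εn and |B| ≥ εn of | (Σ_{i∈A, j∈B} Y_{ij}(ω)) / (|A||B|) − (Σ_{i∈A, j∈B} E[Y_{ij}]) / (|A||B|) | = 0. -/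
open MeasureTheory ProbabilityTheory Filter Topology

/-- Symmetric extension (with zero diagonal) of an array indexed by pairs `i < j`. -/
noncomputable def symmExtArr {Ω : Type*} (Y : {p : ℕ × ℕ // p.1 < p.2} → Ω → ℝ)
    (i j : ℕ) (ω : Ω) : ℝ :=
  if h : i < j then Y ⟨(i, j), h⟩ ω else if h' : j < i then Y ⟨(j, i), h'⟩ ω else 0


namespace AuxUAA

lemma symmExtArr_of_lt {Ω : Type*} (Y : {p : ℕ × ℕ // p.1 < p.2} → Ω → ℝ)
    {i j : ℕ} (h : i < j) (ω : Ω) : symmExtArr Y i j ω = Y ⟨(i, j), h⟩ ω := by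
  unfold symmExtArr; rw [dif_pos h]

lemma symmExtArr_comm {Ω : Type*} (Y : {p : ℕ × ℕ // p.1 < p.2} → Ω → ℝ)
    (i j : ℕ) (ω : Ω) : symmExtArr Y i j ω = symmExtArr Y j i ω := by
  unfold symmExtArr
  rcases lt_trichotomy i j with h | h | h
  · rw [dif_pos h, dif_neg (lt_asymm h), dif_pos h]
  · subst h; rfl
  · rw [dif_neg (lt_asymm h), dif_pos h, dif_pos h]

lemma symmExtArr_self {Ω : Type*} (Y : {p : ℕ × ℕ // p.1 < p.2} → Ω → ℝ)
    (i : ℕ) (ω : Ω) : symmExtArr Y i i ω = 0 := by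
  unfold symmExtArr; simp

/-- counting coefficient -/
def cnt (A B : Finset ℕ) (p : ℕ × ℕ) : ℝ :=
  (if p.1 ∈ A ∧ p.2 ∈ B then 1 else 0) + (if p.2 ∈ A ∧ p.1 ∈ B then 1 else 0)

lemma cnt_nonneg (A B : Finset ℕ) (p : ℕ × ℕ) : 0 ≤ cnt A B p := by
  unfold cnt; split_ifs <;> norm_num

lemma cnt_le_two (A B : Finset ℕ) (p : ℕ × ℕ) : cnt A B p ≤ 2 := by
  unfold cnt; split_ifs <;> norm_num

lemma sum_pairs (g : ℕ → ℕ → ℝ) (hsymm : ∀ i j, g i j = g j i) (hdiag : ∀ i, g i i = 0)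
    {n : ℕ} {A B : Finset ℕ} (hA : A ⊆ Finset.range n) (hB : B ⊆ Finset.range n) :
    ∑ i ∈ A, ∑ j ∈ B, g i j
      = ∑ p ∈ (Finset.range n ×ˢ Finset.range n).filter (fun p => p.1 < p.2),
          cnt A B p * g p.1 p.2 := by
  classical
  rw [← Finset.sum_product']
  have h1 : ∑ p ∈ A ×ˢ B, g p.1 p.2
      = ∑ p ∈ (A ×ˢ B).filter (fun p => p.1 < p.2), g p.1 p.2
        + ∑ p ∈ (A ×ˢ B).filter (fun p => p.2 < p.1), g p.1 p.2 := by
    rw [← Finset.sum_filter_add_sum_filter_not (A ×ˢ B) (fun p => p.1 < p.2)]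
    congr 1
    rw [← Finset.sum_filter_add_sum_filter_not
      ((A ×ˢ B).filter fun p => ¬ p.1 < p.2) (fun p => p.2 < p.1)]
    have hz : ∑ p ∈ ((A ×ˢ B).filter fun p => ¬ p.1 < p.2).filter (fun p => ¬ p.2 < p.1),
        g p.1 p.2 = 0 := by
      apply Finset.sum_eq_zero
      intro p hp
      simp only [Finset.mem_filter] at hp
      have hpe : p.1 = p.2 := le_antisymm (not_lt.1 hp.2) (not_lt.1 hp.1.2)
      rw [← hpe, hdiag]
    rw [hz, add_zero]
    apply Finset.sum_congr _ (fun _ _ => rfl)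
    ext p
    simp only [Finset.mem_filter]
    constructor
    · rintro ⟨⟨h1, _⟩, h3⟩; exact ⟨h1, h3⟩
    · rintro ⟨h1, h3⟩; exact ⟨⟨h1, asymm h3⟩, h3⟩
  rw [h1]
  have h2 : ∑ p ∈ (Finset.range n ×ˢ Finset.range n).filter (fun p => p.1 < p.2),
        cnt A B p * g p.1 p.2
      = ∑ p ∈ ((Finset.range n ×ˢ Finset.range n).filter (fun p => p.1 < p.2)).filter
            (fun p => p.1 ∈ A ∧ p.2 ∈ B), g p.1 p.2
        + ∑ p ∈ ((Finset.range n ×ˢ Finset.range n).filter (fun p => p.1 < p.2)).filter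
            (fun p => p.2 ∈ A ∧ p.1 ∈ B), g p.1 p.2 := by
    have h2a := Finset.sum_filter (s := (Finset.range n ×ˢ Finset.range n).filter
      (fun p => p.1 < p.2)) (fun p => p.1 ∈ A ∧ p.2 ∈ B) (fun p => g p.1 p.2)
    have h2b := Finset.sum_filter (s := (Finset.range n ×ˢ Finset.range n).filter
      (fun p => p.1 < p.2)) (fun p => p.2 ∈ A ∧ p.1 ∈ B) (fun p => g p.1 p.2)
    rw [h2a, h2b, ← Finset.sum_add_distrib]
    apply Finset.sum_congr rfl
    intro p _
    unfold cnt
    rw [add_mul]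
    congr 1 <;> split_ifs <;> simp
  rw [h2]
  congr 1
  · apply Finset.sum_congr _ (fun _ _ => rfl)
    ext p
    simp only [Finset.mem_filter, Finset.mem_product, Finset.mem_range]
    constructor
    · rintro ⟨h1, h3⟩
      exact ⟨⟨⟨Finset.mem_range.1 (hA h1.1), Finset.mem_range.1 (hB h1.2)⟩, h3⟩, h1⟩
    · rintro ⟨⟨_, h3⟩, h1⟩; exact ⟨h1, h3⟩
  · apply Finset.sum_nbij' (i := Prod.swap) (j := Prod.swap)
    · intro p hp
      simp only [Finset.mem_filter, Finset.mem_product, Finset.mem_range] at hp ⊢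
      exact ⟨⟨⟨Finset.mem_range.1 (hB hp.1.2), Finset.mem_range.1 (hA hp.1.1)⟩, hp.2⟩,
        hp.1.1, hp.1.2⟩
    · intro p hp
      simp only [Finset.mem_filter, Finset.mem_product, Finset.mem_range] at hp ⊢
      exact ⟨⟨hp.2.1, hp.2.2⟩, hp.1.2⟩
    · intro p _; simp
    · intro p _; simp
    · intro p _; simp only [Prod.fst_swap, Prod.snd_swap]; exact hsymm p.1 p.2


lemma mgf_le_of_Icc {Ω : Type*} [MeasurableSpace Ω] {P : Measure Ω} [IsProbabilityMeasure P]
    {X : Ω → ℝ} (hX : Measurable X) (hb : ∀ ω, X ω ∈ Set.Icc (-2:ℝ) 2)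
    (h0 : ∫ ω, X ω ∂P = 0) (t : ℝ) :
    mgf X P t ≤ Real.exp (2 * t ^ 2) := by
  have hXint : Integrable X P :=
    (integrable_const (2:ℝ)).mono' hX.aestronglyMeasurable
      (ae_of_all _ fun ω => by
        rw [Real.norm_eq_abs, abs_le]; exact ⟨(hb ω).1, (hb ω).2⟩)
  have hpt : ∀ ω, Real.exp (t * X ω)
      ≤ (Real.exp (-(2*t)) + Real.exp (2*t)) / 2
        + (Real.exp (2*t) - Real.exp (-(2*t))) / 4 * X ω := by
    intro ω
    have hx1 := (hb ω).1; have hx2 := (hb ω).2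
    have hcvx := convexOn_exp.2 (Set.mem_univ (-(2*t))) (Set.mem_univ (2*t))
      (show (0:ℝ) ≤ (2 - X ω)/4 by linarith) (show (0:ℝ) ≤ (2 + X ω)/4 by linarith)
      (show (2 - X ω)/4 + (2 + X ω)/4 = 1 by ring)
    simp only [smul_eq_mul] at hcvx
    have harg : (2 - X ω)/4 * (-(2*t)) + (2 + X ω)/4 * (2*t) = t * X ω := by ring
    rw [harg] at hcvx
    calc Real.exp (t * X ω)
        ≤ (2 - X ω)/4 * Real.exp (-(2*t)) + (2 + X ω)/4 * Real.exp (2*t) := hcvx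
      _ = _ := by ring
  have hexp_int : Integrable (fun ω => Real.exp (t * X ω)) P := by
    refine (integrable_const (Real.exp (|t| * 2))).mono'
      (Real.measurable_exp.comp (hX.const_mul t)).aestronglyMeasurable
      (ae_of_all _ fun ω => ?_)
    rw [Real.norm_eq_abs, abs_of_pos (Real.exp_pos _), Real.exp_le_exp]
    calc t * X ω ≤ |t * X ω| := le_abs_self _
      _ = |t| * |X ω| := abs_mul _ _
      _ ≤ |t| * 2 := by
          have : |X ω| ≤ 2 := abs_le.2 ⟨(hb ω).1, (hb ω).2⟩
          exact mul_le_mul_of_nonneg_left this (abs_nonneg t)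
  have hrhs_int : Integrable (fun ω => (Real.exp (-(2*t)) + Real.exp (2*t)) / 2
        + (Real.exp (2*t) - Real.exp (-(2*t))) / 4 * X ω) P :=
    (integrable_const _).add (hXint.const_mul _)
  have hmono := integral_mono hexp_int hrhs_int hpt
  have hmgf : mgf X P t = ∫ ω, Real.exp (t * X ω) ∂P := rfl
  rw [hmgf]
  calc ∫ ω, Real.exp (t * X ω) ∂P
      ≤ ∫ ω, ((Real.exp (-(2*t)) + Real.exp (2*t)) / 2
          + (Real.exp (2*t) - Real.exp (-(2*t))) / 4 * X ω) ∂P := hmono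
    _ = (Real.exp (-(2*t)) + Real.exp (2*t)) / 2 := by
        rw [integral_add (integrable_const _) (hXint.const_mul _), integral_const,
          integral_const_mul, h0]
        simp
    _ = Real.cosh (2*t) := by rw [Real.cosh_eq]; ring
    _ ≤ Real.exp ((2*t)^2/2) := Real.cosh_le_exp_half_sq _
    _ = Real.exp (2 * t^2) := by ring_nf

lemma chernoff_pair {Ω : Type*} [MeasurableSpace Ω] {P : Measure Ω} [IsProbabilityMeasure P]
    {ι : Type*} {X : ι → Ω → ℝ} (hmeas : ∀ i, Measurable (X i))
    (hb : ∀ i ω, X i ω ∈ Set.Icc (-2:ℝ) 2) (h0 : ∀ i, ∫ ω, X i ω ∂P = 0)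
    (hindep : iIndepFun X P)
    (s : Finset ι) {t a : ℝ} (ht : 0 ≤ t) :
    P {ω | a ≤ |∑ i ∈ s, X i ω|}
      ≤ ENNReal.ofReal (2 * Real.exp (-t * a + 2 * t^2 * s.card)) := by
  classical
  set S : Ω → ℝ := fun ω => ∑ i ∈ s, X i ω with hSdef
  have hS : S = ∑ i ∈ s, X i := by funext ω; rw [Finset.sum_apply]
  have hSmeas : Measurable S := Finset.measurable_sum s (fun i _ => hmeas i)
  have hSbound : ∀ ω, |S ω| ≤ 2 * s.card := by
    intro ω
    calc |S ω| ≤ ∑ i ∈ s, |X i ω| := Finset.abs_sum_le_sum_abs _ _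
      _ ≤ s.card • (2:ℝ) := Finset.sum_le_card_nsmul s _ 2
          (fun i _ => abs_le.2 ⟨(hb i ω).1, (hb i ω).2⟩)
      _ = 2 * s.card := by rw [nsmul_eq_mul]; ring
  have hint : ∀ u : ℝ, Integrable (fun ω => Real.exp (u * S ω)) P := by
    intro u
    refine (integrable_const (Real.exp (|u| * (2 * s.card)))).mono'
      (Real.measurable_exp.comp (hSmeas.const_mul u)).aestronglyMeasurable
      (ae_of_all _ fun ω => ?_)
    rw [Real.norm_eq_abs, abs_of_pos (Real.exp_pos _), Real.exp_le_exp]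
    calc u * S ω ≤ |u * S ω| := le_abs_self _
      _ = |u| * |S ω| := abs_mul _ _
      _ ≤ |u| * (2 * s.card) := mul_le_mul_of_nonneg_left (hSbound ω) (abs_nonneg u)
  have hmgf : ∀ u : ℝ, mgf S P u ≤ Real.exp (2 * u^2 * s.card) := by
    intro u
    rw [hS, hindep.mgf_sum hmeas]
    calc ∏ i ∈ s, mgf (X i) P u ≤ ∏ i ∈ s, Real.exp (2 * u^2) :=
          Finset.prod_le_prod (fun i _ => mgf_nonneg)
            (fun i _ => mgf_le_of_Icc (hmeas i) (hb i) (h0 i) u)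
      _ = Real.exp (2 * u^2) ^ s.card := Finset.prod_const _
      _ = Real.exp (s.card * (2 * u^2)) := (Real.exp_nat_mul _ _).symm
      _ = Real.exp (2 * u^2 * s.card) := by ring_nf
  have hsub : {ω | a ≤ |S ω|} ⊆ {ω | a ≤ S ω} ∪ {ω | S ω ≤ -a} := by
    intro ω hω
    rcases le_abs.1 (show a ≤ |S ω| from hω) with h | h
    · exact Or.inl h
    · exact Or.inr (show S ω ≤ -a by linarith)
  have hup : P {ω | a ≤ S ω} ≤ ENNReal.ofReal (Real.exp (-t * a + 2 * t^2 * s.card)) := by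
    rw [ENNReal.le_ofReal_iff_toReal_le (measure_ne_top _ _) (Real.exp_pos _).le]
    calc (P {ω | a ≤ S ω}).toReal ≤ Real.exp (-t * a) * mgf S P t :=
          measure_ge_le_exp_mul_mgf a ht (hint t)
      _ ≤ Real.exp (-t * a) * Real.exp (2 * t^2 * s.card) :=
          mul_le_mul_of_nonneg_left (hmgf t) (Real.exp_pos _).le
      _ = Real.exp (-t * a + 2 * t^2 * s.card) := (Real.exp_add _ _).symm
  have hlo : P {ω | S ω ≤ -a} ≤ ENNReal.ofReal (Real.exp (-t * a + 2 * t^2 * s.card)) := by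
    rw [ENNReal.le_ofReal_iff_toReal_le (measure_ne_top _ _) (Real.exp_pos _).le]
    calc (P {ω | S ω ≤ -a}).toReal ≤ Real.exp (-(-t) * (-a)) * mgf S P (-t) :=
          measure_le_le_exp_mul_mgf (-a) (neg_nonpos.2 ht) (hint (-t))
      _ ≤ Real.exp (-t * a) * Real.exp (2 * t^2 * s.card) := by
          rw [show -(-t) * -a = -t * a by ring]
          have := hmgf (-t)
          rw [show 2 * (-t)^2 * (s.card:ℝ) = 2 * t^2 * s.card by ring] at this
          exact mul_le_mul_of_nonneg_left this (Real.exp_pos _).le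
      _ = Real.exp (-t * a + 2 * t^2 * s.card) := (Real.exp_add _ _).symm
  calc P {ω | a ≤ |S ω|} ≤ P ({ω | a ≤ S ω} ∪ {ω | S ω ≤ -a}) := measure_mono hsub
    _ ≤ P {ω | a ≤ S ω} + P {ω | S ω ≤ -a} := measure_union_le _ _
    _ ≤ ENNReal.ofReal (Real.exp (-t * a + 2 * t^2 * s.card))
        + ENNReal.ofReal (Real.exp (-t * a + 2 * t^2 * s.card)) := add_le_add hup hlo
    _ = ENNReal.ofReal (2 * Real.exp (-t * a + 2 * t^2 * s.card)) := by
        rw [← ENNReal.ofReal_add (Real.exp_pos _).le (Real.exp_pos _).le]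
        congr 1; ring

lemma summable_aux {c : ℝ} (hc : 0 < c) :
    Summable (fun n : ℕ => (2:ℝ)^n * 2^n * (2 * Real.exp (-c * n^2))) := by
  obtain ⟨N, hN⟩ := exists_nat_ge ((Real.log 4 + 1) / c)
  rw [← summable_nat_add_iff N]
  have hgeo : Summable (fun m : ℕ => (2 * Real.exp (-1) ^ N) * Real.exp (-1) ^ m) :=
    (summable_geometric_of_lt_one (Real.exp_pos _).le
      (Real.exp_lt_one_iff.2 (by norm_num))).mul_left _
  refine Summable.of_nonneg_of_le (fun m => by positivity) (fun m => ?_) hgeo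
  set n : ℕ := m + N with hn
  have h4 : (2:ℝ)^n * 2^n = Real.exp (n * Real.log 4) := by
    rw [Real.exp_nat_mul, Real.exp_log (by norm_num : (0:ℝ) < 4)]
    rw [← mul_pow]; norm_num
  have hcN : Real.log 4 + 1 ≤ c * N := by
    rw [div_le_iff₀ hc] at hN; linarith
  have hexp : (n:ℝ) * Real.log 4 + (-c * n^2) ≤ -n := by
    have hnN : (N:ℝ) * n ≤ (n:ℝ)^2 := by
      have : (N:ℝ) ≤ n := by exact_mod_cast Nat.le_add_left N m
      nlinarith [Nat.cast_nonneg (α := ℝ) n]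
    nlinarith [Nat.cast_nonneg (α := ℝ) n]
  calc (2:ℝ)^n * 2^n * (2 * Real.exp (-c * n^2))
      = 2 * Real.exp ((n:ℝ) * Real.log 4 + (-c * n^2)) := by
        rw [Real.exp_add, h4]; ring
    _ ≤ 2 * Real.exp (-(n:ℝ)) := by
        exact mul_le_mul_of_nonneg_left (Real.exp_le_exp.2 hexp) (by norm_num)
    _ = (2 * Real.exp (-1) ^ N) * Real.exp (-1) ^ m := by
        rw [← Real.exp_nat_mul, ← Real.exp_nat_mul, mul_assoc, ← Real.exp_add]
        congr 1
        push_cast [hn]; ring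

end AuxUAA

/-- (Lemma `limeszlemma`, abstract form.)  For an independent array
`{Y_{ij}}_{i<j}` of `[0,1]`-valued random variables (extended symmetrically with zero
diagonal) and any `ε > 0`, almost surely the maximal deviation
`max_{A,B ⊆ {1,…,n}, |A|,|B| ≥ εn} |avg_{A×B} Y_{ij}(ω) - avg_{A×B} E[Y_{ij}]|`
tends to `0` as `n → ∞`. -/
theorem independent_array_uniform_averages
    (Ω : Type*) [MeasurableSpace Ω] (P : Measure Ω) [IsProbabilityMeasure P]
    (Y : {p : ℕ × ℕ // p.1 < p.2} → Ω → ℝ)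
    (hmeas : ∀ e, Measurable (Y e))
    (hrange : ∀ e ω, Y e ω ∈ Set.Icc (0:ℝ) 1)
    (hindep : iIndepFun Y P)
    (ε : ℝ) (hε : 0 < ε) :
    ∀ᵐ ω ∂P, Tendsto
      (fun n : ℕ => sSup {v : ℝ | ∃ A B : Finset ℕ,
        A ⊆ Finset.range n ∧ B ⊆ Finset.range n ∧
        ε * n ≤ A.card ∧ ε * n ≤ B.card ∧
        v = |(∑ i ∈ A, ∑ j ∈ B, symmExtArr Y i j ω) / (A.card * B.card) -
              (∑ i ∈ A, ∑ j ∈ B, ∫ ω', symmExtArr Y i j ω' ∂P) / (A.card * B.card)|})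
      atTop (𝓝 0) := by
  classical
  have hYint : ∀ e, Integrable (Y e) P := fun e =>
    (integrable_const (1:ℝ)).mono' (hmeas e).aestronglyMeasurable
      (ae_of_all _ fun ω => by
        rw [Real.norm_eq_abs, abs_of_nonneg (hrange e ω).1]; exact (hrange e ω).2)
  set μe : {p : ℕ × ℕ // p.1 < p.2} → ℝ := fun e => ∫ ω, Y e ω ∂P with hμe
  have hμ0 : ∀ e, 0 ≤ μe e := fun e => integral_nonneg (fun ω => (hrange e ω).1)
  have hμ1 : ∀ e, μe e ≤ 1 := by
    intro e
    rw [hμe]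
    have h := integral_mono (hYint e) (integrable_const (1:ℝ)) (fun ω => (hrange e ω).2)
    simpa using h
  set X : Finset ℕ → Finset ℕ → {p : ℕ × ℕ // p.1 < p.2} → Ω → ℝ :=
    fun A B e ω => AuxUAA.cnt A B e.val * (Y e ω - μe e) with hXdef
  have hXmeas : ∀ A B e, Measurable (X A B e) := fun A B e =>
    ((hmeas e).sub_const _).const_mul _
  have hXb : ∀ A B e ω, X A B e ω ∈ Set.Icc (-2:ℝ) 2 := by
    intro A B e ω
    have h1 := (hrange e ω).1; have h2 := (hrange e ω).2
    have h3 := hμ0 e; have h4 := hμ1 e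
    have hc1 := AuxUAA.cnt_nonneg A B e.val; have hc2 := AuxUAA.cnt_le_two A B e.val
    have hp1 : (0:ℝ) ≤ AuxUAA.cnt A B e.val * (Y e ω - μe e + 1) :=
      mul_nonneg hc1 (by linarith)
    have hp2 : (0:ℝ) ≤ AuxUAA.cnt A B e.val * (1 - (Y e ω - μe e)) :=
      mul_nonneg hc1 (by linarith)
    constructor
    · simp only [hXdef]; nlinarith
    · simp only [hXdef]; nlinarith
  have hX0 : ∀ A B e, ∫ ω, X A B e ω ∂P = 0 := by
    intro A B e
    simp only [hXdef]
    rw [integral_const_mul, integral_sub (hYint e) (integrable_const _), integral_const]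
    simp [hμe, measure_univ]
  have hXindep : ∀ A B : Finset ℕ, iIndepFun (X A B) P := by
    intro A B
    exact hindep.comp (fun e (x : ℝ) => AuxUAA.cnt A B e.val * (x - μe e))
      (fun e => (measurable_id.sub_const _).const_mul _)
  set T : ℕ → Finset {p : ℕ × ℕ // p.1 < p.2} :=
    fun n => (Finset.range n ×ˢ Finset.range n).subtype (fun p => p.1 < p.2) with hTdef
  have hTcard : ∀ n : ℕ, ((T n).card : ℝ) ≤ (n:ℝ)^2 := by
    intro n
    have h1 : (T n).card ≤ n * n := by
      simp only [hTdef]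
      calc ((Finset.range n ×ˢ Finset.range n).subtype (fun p => p.1 < p.2)).card
          = ((Finset.range n ×ˢ Finset.range n).filter (fun p => p.1 < p.2)).card :=
            Finset.card_subtype _ _
        _ ≤ (Finset.range n ×ˢ Finset.range n).card := Finset.card_filter_le _ _
        _ = n * n := by rw [Finset.card_product, Finset.card_range]
    calc ((T n).card : ℝ) ≤ ((n * n : ℕ) : ℝ) := by exact_mod_cast h1
      _ = (n:ℝ)^2 := by push_cast; ring
  have hdecomp : ∀ (n : ℕ) (A B : Finset ℕ), A ⊆ Finset.range n → B ⊆ Finset.range n →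
      ∀ ω, (∑ i ∈ A, ∑ j ∈ B, symmExtArr Y i j ω)
          - (∑ i ∈ A, ∑ j ∈ B, ∫ ω', symmExtArr Y i j ω' ∂P)
        = ∑ e ∈ T n, X A B e ω := by
    intro n A B hA hB ω
    have hsub : (∑ i ∈ A, ∑ j ∈ B, symmExtArr Y i j ω)
          - (∑ i ∈ A, ∑ j ∈ B, ∫ ω', symmExtArr Y i j ω' ∂P)
        = ∑ i ∈ A, ∑ j ∈ B,
            (symmExtArr Y i j ω - ∫ ω', symmExtArr Y i j ω' ∂P) := by
      rw [← Finset.sum_sub_distrib]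
      exact Finset.sum_congr rfl (fun i _ => by rw [← Finset.sum_sub_distrib])
    rw [hsub, AuxUAA.sum_pairs
      (fun i j => symmExtArr Y i j ω - ∫ ω', symmExtArr Y i j ω' ∂P)
      (fun i j => by simp only [AuxUAA.symmExtArr_comm Y i j])
      (fun i => by simp [AuxUAA.symmExtArr_self]) hA hB]
    have hterm : ∀ e ∈ T n, X A B e ω
        = AuxUAA.cnt A B e.val * (symmExtArr Y e.val.1 e.val.2 ω
            - ∫ ω', symmExtArr Y e.val.1 e.val.2 ω' ∂P) := by
      intro e _
      have h1 : symmExtArr Y e.val.1 e.val.2 ω = Y e ω := AuxUAA.symmExtArr_of_lt Y e.prop ω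
      have h2 : (∫ ω', symmExtArr Y e.val.1 e.val.2 ω' ∂P) = μe e := by
        rw [hμe]
        exact integral_congr_ae (ae_of_all _ fun ω' => AuxUAA.symmExtArr_of_lt Y e.prop ω')
      simp only [hXdef, h1, h2]
    rw [Finset.sum_congr rfl hterm]
    simp only [hTdef]
    exact (Finset.sum_subtype_eq_sum_filter
      (fun q => AuxUAA.cnt A B q * (symmExtArr Y q.1 q.2 ω
        - ∫ ω', symmExtArr Y q.1 q.2 ω' ∂P))).symm
  have key : ∀ k : ℕ, ∀ᵐ ω ∂P, ∀ᶠ n : ℕ in atTop, ∀ A B : Finset ℕ,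
      A ⊆ Finset.range n → B ⊆ Finset.range n →
      |∑ e ∈ T n, X A B e ω| < (1/((k:ℝ)+1)) * ε^2 * (n:ℝ)^2 := by
    intro k
    set δ : ℝ := 1/((k:ℝ)+1) with hδdef
    have hδ : 0 < δ := by positivity
    set c : ℝ := δ^2 * ε^4 / 8 with hcdef
    have hcpos : 0 < c := by positivity
    set G : ℕ → Set Ω := fun n => ⋃ A ∈ (Finset.range n).powerset,
        ⋃ B ∈ (Finset.range n).powerset,
        {ω | δ * ε^2 * (n:ℝ)^2 ≤ |∑ e ∈ T n, X A B e ω|} with hGdef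
    have hGbound : ∀ n : ℕ, P (G n)
        ≤ ENNReal.ofReal ((2:ℝ)^n * 2^n * (2 * Real.exp (-c * (n:ℝ)^2))) := by
      intro n
      set t : ℝ := δ * ε^2 / 4 with htdef
      have ht : 0 ≤ t := by positivity
      have hsingle : ∀ A B : Finset ℕ,
          P {ω | δ * ε^2 * (n:ℝ)^2 ≤ |∑ e ∈ T n, X A B e ω|}
            ≤ ENNReal.ofReal (2 * Real.exp (-c * (n:ℝ)^2)) := by
        intro A B
        refine le_trans (AuxUAA.chernoff_pair (hXmeas A B) (hXb A B) (hX0 A B)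
          (hXindep A B) (T n) ht) ?_
        apply ENNReal.ofReal_le_ofReal
        have h1 := hTcard n
        have hexp : -t * (δ * ε^2 * (n:ℝ)^2) + 2 * t^2 * ((T n).card : ℝ)
            ≤ -c * (n:ℝ)^2 := by
          rw [htdef, hcdef]
          nlinarith [mul_le_mul_of_nonneg_left h1
            (show (0:ℝ) ≤ δ^2 * ε^4 / 8 by positivity)]
        have := Real.exp_le_exp.2 hexp
        linarith
      calc P (G n) ≤ ∑ A ∈ (Finset.range n).powerset, P (⋃ B ∈ (Finset.range n).powerset,
            {ω | δ * ε^2 * (n:ℝ)^2 ≤ |∑ e ∈ T n, X A B e ω|}) := by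
            rw [hGdef]; exact measure_biUnion_finset_le _ _
        _ ≤ ∑ A ∈ (Finset.range n).powerset, ∑ B ∈ (Finset.range n).powerset,
            P {ω | δ * ε^2 * (n:ℝ)^2 ≤ |∑ e ∈ T n, X A B e ω|} :=
            Finset.sum_le_sum (fun A _ => measure_biUnion_finset_le _ _)
        _ ≤ ∑ A ∈ (Finset.range n).powerset, ∑ B ∈ (Finset.range n).powerset,
            ENNReal.ofReal (2 * Real.exp (-c * (n:ℝ)^2)) :=
            Finset.sum_le_sum (fun A _ => Finset.sum_le_sum (fun B _ => hsingle A B))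
        _ = (((2^n * 2^n : ℕ) : ℕ) : ENNReal) * ENNReal.ofReal (2 * Real.exp (-c * (n:ℝ)^2)) := by
            rw [Finset.sum_const, Finset.sum_const, Finset.card_powerset, Finset.card_range,
              smul_smul, nsmul_eq_mul]
        _ = ENNReal.ofReal ((2:ℝ)^n * 2^n * (2 * Real.exp (-c * (n:ℝ)^2))) := by
            rw [ENNReal.ofReal_mul (show (0:ℝ) ≤ (2:ℝ)^n * 2^n by positivity)]
            congr 1
            rw [show ((2:ℝ)^n * 2^n) = ((2^n * 2^n : ℕ) : ℝ) by push_cast; ring,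
              ENNReal.ofReal_natCast]
    have hsum : (∑' n, P (G n)) ≠ ⊤ := by
      have hs := AuxUAA.summable_aux hcpos
      have hle : (∑' n, P (G n))
          ≤ ∑' n : ℕ, ENNReal.ofReal ((2:ℝ)^n * 2^n * (2 * Real.exp (-c * (n:ℝ)^2))) :=
        ENNReal.tsum_le_tsum hGbound
      have heq : (∑' n : ℕ, ENNReal.ofReal ((2:ℝ)^n * 2^n * (2 * Real.exp (-c * (n:ℝ)^2))))
          = ENNReal.ofReal (∑' n : ℕ, (2:ℝ)^n * 2^n * (2 * Real.exp (-c * (n:ℝ)^2))) :=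
        (ENNReal.ofReal_tsum_of_nonneg (fun n => by positivity) hs).symm
      exact ne_top_of_le_ne_top (by rw [heq]; exact ENNReal.ofReal_ne_top) hle
    filter_upwards [MeasureTheory.ae_eventually_notMem hsum] with ω hω
    filter_upwards [hω] with n hn A B hA hB
    by_contra hcon
    push_neg at hcon
    refine hn ?_
    rw [hGdef]
    exact Set.mem_iUnion₂.2 ⟨A, Finset.mem_powerset.2 hA,
      Set.mem_iUnion₂.2 ⟨B, Finset.mem_powerset.2 hB, hcon⟩⟩
  have key' : ∀ᵐ ω ∂P, ∀ k : ℕ, ∀ᶠ n : ℕ in atTop, ∀ A B : Finset ℕ,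
      A ⊆ Finset.range n → B ⊆ Finset.range n →
      |∑ e ∈ T n, X A B e ω| < (1/((k:ℝ)+1)) * ε^2 * (n:ℝ)^2 := ae_all_iff.2 key
  filter_upwards [key'] with ω hω
  rw [Metric.tendsto_atTop]
  intro η hη
  obtain ⟨k, hk⟩ := exists_nat_one_div_lt hη
  obtain ⟨N, hN⟩ := eventually_atTop.1 (hω k)
  refine ⟨max N 1, fun n hn => ?_⟩
  have hn1 : 1 ≤ n := le_trans (le_max_right _ _) hn
  have hnN : N ≤ n := le_trans (le_max_left _ _) hn
  have hnpos : (0:ℝ) < n := by exact_mod_cast hn1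
  have hbound : ∀ v ∈ {v : ℝ | ∃ A B : Finset ℕ,
      A ⊆ Finset.range n ∧ B ⊆ Finset.range n ∧
      ε * n ≤ A.card ∧ ε * n ≤ B.card ∧
      v = |(∑ i ∈ A, ∑ j ∈ B, symmExtArr Y i j ω) / (A.card * B.card) -
            (∑ i ∈ A, ∑ j ∈ B, ∫ ω', symmExtArr Y i j ω' ∂P) / (A.card * B.card)|},
      v ≤ 1/((k:ℝ)+1) := by
    rintro v ⟨A, B, hA, hB, hcA, hcB, rfl⟩
    have hApos : (0:ℝ) < A.card := lt_of_lt_of_le (by positivity) hcA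
    have hBpos : (0:ℝ) < B.card := lt_of_lt_of_le (by positivity) hcB
    have hab : (0:ℝ) < (A.card : ℝ) * B.card := mul_pos hApos hBpos
    rw [div_sub_div_same, abs_div, abs_of_pos hab, hdecomp n A B hA hB ω,
      div_le_iff₀ hab]
    have h1 := (hN n hnN A B hA hB).le
    have h2 : ε^2 * (n:ℝ)^2 ≤ (A.card : ℝ) * B.card := by
      have := mul_le_mul hcA hcB (by positivity) (Nat.cast_nonneg A.card)
      nlinarith
    calc |∑ e ∈ T n, X A B e ω| ≤ 1/((k:ℝ)+1) * ε^2 * (n:ℝ)^2 := h1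
      _ ≤ 1/((k:ℝ)+1) * ((A.card:ℝ) * B.card) := by
          rw [mul_assoc]
          exact mul_le_mul_of_nonneg_left h2 (by positivity)
  have hle := Real.sSup_le hbound (by positivity)
  have hge : (0:ℝ) ≤ sSup {v : ℝ | ∃ A B : Finset ℕ,
      A ⊆ Finset.range n ∧ B ⊆ Finset.range n ∧
      ε * n ≤ A.card ∧ ε * n ≤ B.card ∧
      v = |(∑ i ∈ A, ∑ j ∈ B, symmExtArr Y i j ω) / (A.card * B.card) -
            (∑ i ∈ A, ∑ j ∈ B, ∫ ω', symmExtArr Y i j ω' ∂P) / (A.card * B.card)|} :=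
    Real.sSup_nonneg (by rintro v ⟨A, B, _, _, _, _, rfl⟩; exact abs_nonneg _)
  rw [Real.dist_eq, sub_zero, abs_of_nonneg hge]
  exact lt_of_le_of_lt hle hk
end
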